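/- arXiv:1911.01515 — 8 statements merged into one kernel-verified Lean document; each statement's English description precedes it below -/
import Mathlib

section
/- For every N-periodic billiard orbit P in the ellipse E, the Joachimsthal quantity is invariant along the orbit: the number (1/2)·(u_{i−1} · ∇f(P i)) is the same for all indices i ∈ ZMod N (here u_{i−1} is the unit incoming direction at the bounce point P i). -/
open scoped RealInnerProductSpace

noncomputable section

abbrev Pt : Type := EuclideanSpace ℝ (Fin 2)

/-- f(x,y) = x²/a² + y²/b² -/
def fE (a b : ℝ) (p : Pt) : ℝ := (p 0) ^ 2 / a ^ 2 + (p 1) ^ 2 / b ^ 2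

/-- ∇f(x,y) = (2x/a², 2y/b²) -/
def gradE (a b : ℝ) (p : Pt) : Pt :=
  (WithLp.equiv 2 (Fin 2 → ℝ)).symm ![2 * p 0 / a ^ 2, 2 * p 1 / b ^ 2]

/-- unit vector from `p` to `q` -/
def uvec (p q : Pt) : Pt := ‖q - p‖⁻¹ • (q - p)

/-- An N-periodic billiard orbit in the ellipse with semiaxes a, b:
vertices on the ellipse, consecutive vertices distinct, and the elastic
reflection law `u_i = u_{i-1} - 2 (u_{i-1}·n_i) n_i` at each bounce. -/
def IsOrbit (a b : ℝ) {N : ℕ} (P : ZMod N → Pt) : Prop :=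
  (∀ i, fE a b (P i) = 1) ∧ (∀ i, P (i + 1) ≠ P i) ∧
  ∀ i : ZMod N,
    uvec (P i) (P (i + 1)) =
      uvec (P (i - 1)) (P i) -
        (2 * ⟪uvec (P (i - 1)) (P i), ‖gradE a b (P i)‖⁻¹ • gradE a b (P i)⟫) •
          (‖gradE a b (P i)‖⁻¹ • gradE a b (P i))

/-- Joachimsthal quantity (1/2)·(u_{i−1} · ∇f(P i)) at bounce i. -/
def joach (a b : ℝ) {N : ℕ} (P : ZMod N → Pt) (i : ZMod N) : ℝ :=
  (1 / 2) * ⟪uvec (P (i - 1)) (P i), gradE a b (P i)⟫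

/-- planar cross product (determinant) -/
def cross (u v : Pt) : ℝ := u 0 * v 1 - u 1 * v 0

/-- Convex orbit: for each side, all other vertices lie strictly on one
and the same side of the line through P i and P (i+1). -/
def IsConvexOrbit (a b : ℝ) {N : ℕ} (P : ZMod N → Pt) : Prop :=
  IsOrbit a b P ∧
  ∀ i : ZMod N,
    (∀ j, j ≠ i → j ≠ i + 1 → 0 < cross (P (i + 1) - P i) (P j - P i)) ∨
    (∀ j, j ≠ i → j ≠ i + 1 → cross (P (i + 1) - P i) (P j - P i) < 0)


lemma gradE_apply0 (a b : ℝ) (p : Pt) : gradE a b p 0 = 2 * p 0 / a ^ 2 := rfl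
lemma gradE_apply1 (a b : ℝ) (p : Pt) : gradE a b p 1 = 2 * p 1 / b ^ 2 := rfl

lemma gradE_ne_zero (a b : ℝ) (hb : 0 < b) (hab : b ≤ a) (p : Pt)
    (hp : fE a b p = 1) : gradE a b p ≠ 0 := by
  have ha : (0:ℝ) < a := lt_of_lt_of_le hb hab
  intro h
  have h0 : gradE a b p 0 = 0 := by rw [h]; rfl
  have h1 : gradE a b p 1 = 0 := by rw [h]; rfl
  rw [gradE_apply0] at h0
  rw [gradE_apply1] at h1
  have hp0 : p 0 = 0 := by field_simp at h0; linarith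
  have hp1 : p 1 = 0 := by field_simp at h1; linarith
  rw [fE, hp0, hp1] at hp
  simp at hp

lemma key2 (a b : ℝ) (ha : a ≠ 0) (hb : b ≠ 0) (p q : Pt)
    (hp : fE a b p = 1) (hq : fE a b q = 1) :
    ⟪q - p, gradE a b q⟫ = - ⟪q - p, gradE a b p⟫ := by
  have : ⟪q - p, gradE a b q⟫ + ⟪q - p, gradE a b p⟫ = 0 := by
    simp only [PiLp.inner_apply, RCLike.inner_apply, starRingEnd_apply, star_trivial,
      Fin.sum_univ_two, PiLp.sub_apply, gradE_apply0, gradE_apply1]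
    rw [fE] at hp hq
    field_simp
    field_simp at hp hq
    nlinarith [hp, hq]
  linarith

lemma refl_flip (g u u' : Pt) (hg : g ≠ 0)
    (h : u' = u - (2 * ⟪u, ‖g‖⁻¹ • g⟫) • (‖g‖⁻¹ • g)) :
    ⟪u', g⟫ = - ⟪u, g⟫ := by
  have hng : ‖g‖ ≠ 0 := norm_ne_zero_iff.mpr hg
  rw [h, inner_sub_left, inner_smul_left, inner_smul_left, inner_smul_right,
    real_inner_self_eq_norm_sq]
  simp only [conj_trivial]
  field_simp
  ring

/-- the Joachimsthal quantity is invariant along any N-periodic orbit. -/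
theorem joachimsthal_invariant (a b : ℝ) (hb : 0 < b) (hab : b ≤ a)
    (N : ℕ) (hN : 3 ≤ N) (P : ZMod N → Pt) (hP : IsOrbit a b P) :
    ∀ i j : ZMod N, joach a b P i = joach a b P j := by
  have ha : (0:ℝ) < a := lt_of_lt_of_le hb hab
  obtain ⟨hon, hne, hrefl⟩ := hP
  have step : ∀ i : ZMod N, joach a b P (i + 1) = joach a b P i := by
    intro i
    have hg : gradE a b (P i) ≠ 0 := gradE_ne_zero a b hb hab _ (hon i)
    have h1 : ⟪uvec (P i) (P (i + 1)), gradE a b (P i)⟫ =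
        - ⟪uvec (P (i - 1)) (P i), gradE a b (P i)⟫ :=
      refl_flip _ _ _ hg (hrefl i)
    have h2 : ⟪uvec (P i) (P (i + 1)), gradE a b (P (i + 1))⟫ =
        - ⟪uvec (P i) (P (i + 1)), gradE a b (P i)⟫ := by
      rw [uvec, inner_smul_left, inner_smul_left,
        key2 a b ha.ne' hb.ne' (P i) (P (i + 1)) (hon i) (hon (i + 1))]
      ring
    have h3 : (i + 1 : ZMod N) - 1 = i := by ring
    rw [joach, h3, joach, h2, h1]
    ring
  intro i j
  have key : ∀ (k : ℕ) (i : ZMod N), joach a b P (i + k) = joach a b P i := by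
    intro k
    induction k with
    | zero => simp
    | succ n ih =>
      intro i
      have : (i + (n + 1 : ℕ) : ZMod N) = (i + n) + 1 := by push_cast; ring
      rw [this, step, ih]
  haveI : NeZero N := ⟨by omega⟩
  have := key (j - i).val i
  rw [ZMod.natCast_val, ZMod.cast_id, add_sub_cancel] at this
  exact this.symm
end
end

section
/- Let A, B, C be the vertices of a 3-periodic billiard orbit of E, with side lengths ℓ_A, ℓ_B, ℓ_C and semiperimeter s = (ℓ_A + ℓ_B + ℓ_C)/2. Suppose 0 < λ < b² and the confocal ellipse C_λ = {(x,y) : x²/(a²−λ) + y²/(b²−λ) = 1} is tangent to each of the three side lines of the triangle ABC (meets each side line in exactly one point). Then the three extouch points e_A = B + ((s − ℓ_C)/ℓ_A)·(C − B), e_B = C + ((s − ℓ_A)/ℓ_B)·(A − C), e_C = A + ((s − ℓ_B)/ℓ_C)·(B − A) all lie on C_λ (the caustic). -/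
set_option maxHeartbeats 1000000


open scoped RealInnerProductSpace

noncomputable section

/-- side length ℓ_A = ‖B − C‖ -/
def lA (P : ZMod 3 → Pt) : ℝ := ‖P 1 - P 2‖
/-- side length ℓ_B = ‖C − A‖ -/
def lB (P : ZMod 3 → Pt) : ℝ := ‖P 2 - P 0‖
/-- side length ℓ_C = ‖A − B‖ -/
def lC (P : ZMod 3 → Pt) : ℝ := ‖P 0 - P 1‖
/-- semiperimeter -/
def sper (P : ZMod 3 → Pt) : ℝ := (lA P + lB P + lC P) / 2
/-- area Δ = |det(B − A, C − A)|/2 -/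
def areaT (P : ZMod 3 → Pt) : ℝ := |cross (P 1 - P 0) (P 2 - P 0)| / 2
/-- inradius r = Δ/s -/
def inradius (P : ZMod 3 → Pt) : ℝ := areaT P / sper P
/-- circumradius R = ℓ_A ℓ_B ℓ_C/(4Δ) -/
def circumradius (P : ZMod 3 → Pt) : ℝ := lA P * lB P * lC P / (4 * areaT P)
/-- incenter I = (ℓ_A·A + ℓ_B·B + ℓ_C·C)/(2s) -/
def incenterT (P : ZMod 3 → Pt) : Pt :=
  (2 * sper P)⁻¹ • (lA P • P 0 + lB P • P 1 + lC P • P 2)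

/-- membership in the confocal caustic C_λ = {(x,y) : x²/(a²−λ) + y²/(b²−λ) = 1} -/
def causticMem (a b lam : ℝ) (p : Pt) : Prop :=
  (p 0) ^ 2 / (a ^ 2 - lam) + (p 1) ^ 2 / (b ^ 2 - lam) = 1

/-- the line through two points -/
def lineThrough (p q : Pt) : Set Pt := {z | ∃ t : ℝ, z = p + t • (q - p)}

lemma quad_unique {al be ga t0 : ℝ} (hal : al ≠ 0)
    (h0 : al*t0^2+2*be*t0+ga = 0)
    (huniq : ∀ t, al*t^2+2*be*t+ga = 0 → t = t0) :
    be = -al*t0 ∧ ga = al*t0^2 := by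
  have halt1 : al * (-2*be/al - t0) = -2*be - al*t0 := by
    field_simp
  have h1 : al*(-2*be/al - t0)^2+2*be*(-2*be/al - t0)+ga = 0 := by
    have h2 : al*(al*(-2*be/al - t0)^2+2*be*(-2*be/al - t0)+ga)
        = (al*(-2*be/al - t0))^2 + 2*be*(al*(-2*be/al - t0)) + al*ga := by ring
    have h3 : al*(al*(-2*be/al - t0)^2+2*be*(-2*be/al - t0)+ga) = al * 0 := by
      rw [h2, halt1]
      linear_combination al*h0
    exact mul_left_cancel₀ hal h3
  have h2 := huniq _ h1
  have hbe : be = -al*t0 := by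
    have h3 : al*(-2*be/al - t0) = al*t0 := by rw [h2]
    rw [halt1] at h3
    linarith
  refine ⟨hbe, ?_⟩
  rw [hbe] at h0
  linarith [h0]

lemma interval_of_prod_neg {t : ℝ} (h : t*(t-1) < 0) : 0 < t ∧ t < 1 := by
  constructor <;> nlinarith [h, sq_nonneg t, sq_nonneg (t-1)]

lemma side_main (a b lam : ℝ) (hb : 0 < b) (hab : b ≤ a) (hl0 : 0 < lam) (hlb : lam < b^2)
    (p q : Pt) (hp : fE a b p = 1) (hq : fE a b q = 1) (hne : q ≠ p)
    (ht : ∃! z : Pt, z ∈ lineThrough p q ∧ causticMem a b lam z) :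
    ∃ τ : ℝ, 0 < τ ∧ τ < 1 ∧
      0 < (b^2-lam)*(q 0 - p 0)^2 + (a^2-lam)*(q 1 - p 1)^2 ∧
      (b^2-lam)*(p 0)^2 + (a^2-lam)*(p 1)^2 - (a^2-lam)*(b^2-lam)
        = ((b^2-lam)*(q 0 - p 0)^2 + (a^2-lam)*(q 1 - p 1)^2) * τ^2 ∧
      (b^2-lam)*(q 0)^2 + (a^2-lam)*(q 1)^2 - (a^2-lam)*(b^2-lam)
        = ((b^2-lam)*(q 0 - p 0)^2 + (a^2-lam)*(q 1 - p 1)^2) * (1-τ)^2 ∧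
      causticMem a b lam (p + τ • (q - p)) := by
  have ha : 0 < a := lt_of_lt_of_le hb hab
  have hB2 : 0 < b^2 - lam := by linarith
  have hA2 : 0 < a^2 - lam := by nlinarith
  set A2 := a^2 - lam with hA2def
  set B2 := b^2 - lam with hB2def
  set p0 := p 0 with hp0; set p1 := p 1 with hp1
  set q0 := q 0 with hq0; set q1 := q 1 with hq1
  set w0 := q0 - p0 with hw0; set w1 := q1 - p1 with hw1
  -- cleared ellipse memberships
  have hp' : b^2*p0^2 + a^2*p1^2 = a^2*b^2 := by
    have := hp; unfold fE at this
    field_simp at this; linear_combination this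
  have hq' : b^2*q0^2 + a^2*q1^2 = a^2*b^2 := by
    have := hq; unfold fE at this
    field_simp at this; linear_combination this
  have hw : w0 ≠ 0 ∨ w1 ≠ 0 := by
    by_contra h
    push_neg at h
    apply hne
    ext i
    fin_cases i
    · show q 0 = p 0
      have := h.1; rw [hw0] at this; linarith
    · show q 1 = p 1
      have := h.2; rw [hw1] at this; linarith
  set al := B2*w0^2 + A2*w1^2 with hal_def
  have hal : 0 < al := by
    rcases hw with h | h
    · have : 0 < B2*w0^2 := by positivity
      nlinarith [sq_nonneg w1]
    · have : 0 < A2*w1^2 := by positivity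
      nlinarith [sq_nonneg w0]
  set be := B2*p0*w0 + A2*p1*w1 with hbe_def
  set ga := B2*p0^2 + A2*p1^2 - A2*B2 with hga_def
  -- caustic membership on the line <-> quadratic
  have key : ∀ t : ℝ, causticMem a b lam (p + t • (q - p)) ↔ al*t^2+2*be*t+ga = 0 := by
    intro t
    have e0 : (p + t • (q - p)) 0 = p0 + t*w0 := by
      simp [PiLp.add_apply, PiLp.smul_apply, PiLp.sub_apply, hp0, hq0, hw0]
      try ring
    have e1 : (p + t • (q - p)) 1 = p1 + t*w1 := by
      simp [PiLp.add_apply, PiLp.smul_apply, PiLp.sub_apply, hp1, hq1, hw1]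
      try ring
    unfold causticMem
    rw [e0, e1, ← hA2def, ← hB2def]
    rw [div_add_div _ _ (ne_of_gt hA2) (ne_of_gt hB2), div_eq_one_iff_eq (by positivity)]
    constructor
    · intro h; linear_combination h
    · intro h; linear_combination h
  obtain ⟨z, ⟨⟨t0, hzline⟩, hzc⟩, huni⟩ := ht
  have hQt0 : al*t0^2+2*be*t0+ga = 0 := by
    rw [← key t0]; rw [← hzline]; exact hzc
  have huniq : ∀ t, al*t^2+2*be*t+ga = 0 → t = t0 := by
    intro t htq
    have hmem : p + t • (q - p) = z := by
      apply (huni (p + t • (q - p)) ⟨⟨t, rfl⟩, (key t).2 htq⟩)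
    rw [hzline] at hmem
    have h0 := congrArg (fun v : Pt => v 0) hmem
    have h1 := congrArg (fun v : Pt => v 1) hmem
    simp only [PiLp.add_apply, PiLp.smul_apply, PiLp.sub_apply, smul_eq_mul] at h0 h1
    rcases hw with hh | hh
    · have : t * w0 = t0 * w0 := by rw [hw0, hq0, hp0]; linarith
      exact mul_right_cancel₀ hh this
    · have : t * w1 = t0 * w1 := by rw [hw1, hq1, hp1]; linarith
      exact mul_right_cancel₀ hh this
  obtain ⟨hbeq, hgaq⟩ := quad_unique (ne_of_gt hal) hQt0 huniq
  -- t0 in (0,1)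
  have hzcoord0 : z 0 = p0 + t0*w0 := by
    rw [hzline]
    simp [PiLp.add_apply, PiLp.smul_apply, PiLp.sub_apply, hp0, hq0, hw0]
    try ring
  have hzcoord1 : z 1 = p1 + t0*w1 := by
    rw [hzline]
    simp [PiLp.add_apply, PiLp.smul_apply, PiLp.sub_apply, hp1, hq1, hw1]
    try ring
  have hzc' : B2*(z 0)^2 + A2*(z 1)^2 = A2*B2 := by
    unfold causticMem at hzc
    rw [← hA2def, ← hB2def] at hzc
    rw [div_add_div _ _ (ne_of_gt hA2) (ne_of_gt hB2), div_eq_one_iff_eq (by positivity)] at hzc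
    linear_combination hzc
  have hz0b : (z 0)^2 ≤ A2 := by nlinarith [sq_nonneg (z 1)]
  have hz1b : (z 1)^2 ≤ B2 := by nlinarith [sq_nonneg (z 0)]
  have hfEz : b^2*(z 0)^2 + a^2*(z 1)^2 < a^2*b^2 := by nlinarith
  set c := b^2*w0^2 + a^2*w1^2 with hc_def
  have hc : 0 < c := by
    rcases hw with h | h
    · have : 0 < b^2*w0^2 := by positivity
      nlinarith [sq_nonneg w1]
    · have : 0 < a^2*w1^2 := by positivity
      nlinarith [sq_nonneg w0]
  have hQE : b^2*(p0+t0*w0)^2 + a^2*(p1+t0*w1)^2 - a^2*b^2 = c*t0^2 - c*t0 := by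
    have hd : c + 2*(b^2*p0*w0 + a^2*p1*w1) = 0 := by
      linear_combination hq' - hp'
    linear_combination hp' + t0*hd
  rw [hzcoord0, hzcoord1] at hfEz
  have h5 : c*t0^2 - c*t0 < 0 := by linarith [hQE]
  have ht01 : t0*(t0-1) < 0 := by
    by_contra hcon
    push_neg at hcon
    have h6 : 0 ≤ c*(t0*(t0-1)) := mul_nonneg hc.le hcon
    have heq : c*(t0*(t0-1)) = c*t0^2 - c*t0 := by ring
    linarith [h6, heq, h5]
  obtain ⟨ht0pos, ht0lt⟩ := interval_of_prod_neg ht01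
  refine ⟨t0, ht0pos, ht0lt, ?_, ?_, ?_, ?_⟩
  · exact hal
  · exact hgaq
  · have hgq : B2*q0^2 + A2*q1^2 - A2*B2 = al + 2*be + ga := by
      simp only [hal_def, hbe_def, hga_def, hw0, hw1]
      ring
    rw [hgq, hbeq, hgaq]; ring
  · rw [key t0]; exact hQt0

lemma norm_sq_pt (v : Pt) : ‖v‖^2 = (v 0)^2 + (v 1)^2 := by
  rw [EuclideanSpace.norm_eq]
  rw [Real.sq_sqrt (by positivity)]
  simp [Fin.sum_univ_two, sq_abs]

/-- the extouch points of a 3-periodic orbit lie on the confocal caustic. -/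
theorem extouch_points_on_caustic (a b : ℝ) (hb : 0 < b) (hab : b ≤ a)
    (P : ZMod 3 → Pt) (hP : IsOrbit a b P) (lam : ℝ) (hlam0 : 0 < lam)
    (hlamb : lam < b ^ 2)
    (htan : ∀ i : ZMod 3,
      ∃! z : Pt, z ∈ lineThrough (P i) (P (i + 1)) ∧ causticMem a b lam z) :
    causticMem a b lam (P 1 + ((sper P - lC P) / lA P) • (P 2 - P 1)) ∧
    causticMem a b lam (P 2 + ((sper P - lA P) / lB P) • (P 0 - P 2)) ∧
    causticMem a b lam (P 0 + ((sper P - lB P) / lC P) • (P 1 - P 0)) := by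
  obtain ⟨hon, hneq, -⟩ := hP
  have ha : 0 < a := lt_of_lt_of_le hb hab
  have hB2' : 0 < b^2 - lam := by linarith
  have hA2' : 0 < a^2 - lam := by nlinarith
  have e01 : ((0 : ZMod 3) + 1) = 1 := by decide
  have e12 : ((1 : ZMod 3) + 1) = 2 := by decide
  have e20 : ((2 : ZMod 3) + 1) = 0 := by decide
  have h10 : P 1 ≠ P 0 := e01 ▸ hneq 0
  have h21 : P 2 ≠ P 1 := e12 ▸ hneq 1
  have h02 : P 0 ≠ P 2 := e20 ▸ hneq 2
  have ht0 := htan 0; rw [e01] at ht0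
  have ht1 := htan 1; rw [e12] at ht1
  have ht2 := htan 2; rw [e20] at ht2
  obtain ⟨tC, htC0, htC1, halC, hGA_AB, hGB_AB, hmemAB⟩ :=
    side_main a b lam hb hab hlam0 hlamb (P 0) (P 1) (hon 0) (hon 1) h10 ht0
  obtain ⟨tA, htA0, htA1, halA, hGB_BC, hGC_BC, hmemBC⟩ :=
    side_main a b lam hb hab hlam0 hlamb (P 1) (P 2) (hon 1) (hon 2) h21 ht1
  obtain ⟨tB, htB0, htB1, halB, hGC_CA, hGA_CA, hmemCA⟩ :=
    side_main a b lam hb hab hlam0 hlamb (P 2) (P 0) (hon 2) (hon 0) h02 ht2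
  set A0 := P 0 0 with hA0
  set A1 := P 0 1 with hA1
  set B0 := P 1 0 with hB0
  set B1 := P 1 1 with hB1
  set C0 := P 2 0 with hC0
  set C1 := P 2 1 with hC1
  set A2 := a^2 - lam with hA2def
  set B2 := b^2 - lam with hB2def
  -- ellipse memberships, cleared
  have hpA : b^2*A0^2 + a^2*A1^2 = a^2*b^2 := by
    have := hon 0; unfold fE at this; field_simp at this; linear_combination this
  have hpB : b^2*B0^2 + a^2*B1^2 = a^2*b^2 := by
    have := hon 1; unfold fE at this; field_simp at this; linear_combination this
  have hpC : b^2*C0^2 + a^2*C1^2 = a^2*b^2 := by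
    have := hon 2; unfold fE at this; field_simp at this; linear_combination this
  -- g's
  set gA := Real.sqrt (B2*A0^2 + A2*A1^2 - A2*B2) with hgAdef
  set gB := Real.sqrt (B2*B0^2 + A2*B1^2 - A2*B2) with hgBdef
  set gC := Real.sqrt (B2*C0^2 + A2*C1^2 - A2*B2) with hgCdef
  have hGApos : 0 < B2*A0^2 + A2*A1^2 - A2*B2 := by
    rw [hGA_AB]; exact mul_pos halC (pow_pos htC0 2)
  have hGBpos : 0 < B2*B0^2 + A2*B1^2 - A2*B2 := by
    rw [hGB_BC]; exact mul_pos halA (pow_pos htA0 2)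
  have hGCpos : 0 < B2*C0^2 + A2*C1^2 - A2*B2 := by
    rw [hGC_CA]; exact mul_pos halB (pow_pos htB0 2)
  have hgA2 : gA^2 = B2*A0^2 + A2*A1^2 - A2*B2 := Real.sq_sqrt hGApos.le
  have hgB2 : gB^2 = B2*B0^2 + A2*B1^2 - A2*B2 := Real.sq_sqrt hGBpos.le
  have hgC2 : gC^2 = B2*C0^2 + A2*C1^2 - A2*B2 := Real.sq_sqrt hGCpos.le
  have hgA : 0 < gA := Real.sqrt_pos.mpr hGApos
  have hgB : 0 < gB := Real.sqrt_pos.mpr hGBpos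
  have hgC : 0 < gC := Real.sqrt_pos.mpr hGCpos
  -- sqrt decompositions per side
  have hgA_AB : gA = Real.sqrt (B2*(B0-A0)^2 + A2*(B1-A1)^2) * tC := by
    rw [hgAdef, hGA_AB, Real.sqrt_mul halC.le, Real.sqrt_sq htC0.le]
  have hgB_AB : gB = Real.sqrt (B2*(B0-A0)^2 + A2*(B1-A1)^2) * (1-tC) := by
    rw [hgBdef, hGB_AB, Real.sqrt_mul halC.le, Real.sqrt_sq (by linarith : (0:ℝ) ≤ 1 - tC)]
  have hgB_BC : gB = Real.sqrt (B2*(C0-B0)^2 + A2*(C1-B1)^2) * tA := by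
    rw [hgBdef, hGB_BC, Real.sqrt_mul halA.le, Real.sqrt_sq htA0.le]
  have hgC_BC : gC = Real.sqrt (B2*(C0-B0)^2 + A2*(C1-B1)^2) * (1-tA) := by
    rw [hgCdef, hGC_BC, Real.sqrt_mul halA.le, Real.sqrt_sq (by linarith : (0:ℝ) ≤ 1 - tA)]
  have hgC_CA : gC = Real.sqrt (B2*(A0-C0)^2 + A2*(A1-C1)^2) * tB := by
    rw [hgCdef, hGC_CA, Real.sqrt_mul halB.le, Real.sqrt_sq htB0.le]
  have hgA_CA : gA = Real.sqrt (B2*(A0-C0)^2 + A2*(A1-C1)^2) * (1-tB) := by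
    rw [hgAdef, hGA_CA, Real.sqrt_mul halB.le, Real.sqrt_sq (by linarith : (0:ℝ) ≤ 1 - tB)]
  have hsumC : gA + gB = Real.sqrt (B2*(B0-A0)^2 + A2*(B1-A1)^2) := by
    rw [hgA_AB, hgB_AB]; ring
  have hsumA : gB + gC = Real.sqrt (B2*(C0-B0)^2 + A2*(C1-B1)^2) := by
    rw [hgB_BC, hgC_BC]; ring
  have hsumB : gC + gA = Real.sqrt (B2*(A0-C0)^2 + A2*(A1-C1)^2) := by
    rw [hgC_CA, hgA_CA]; ring
  have hxC2 : (gA+gB)^2 = B2*(B0-A0)^2 + A2*(B1-A1)^2 := by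
    rw [hsumC]; exact Real.sq_sqrt halC.le
  have hxA2 : (gB+gC)^2 = B2*(C0-B0)^2 + A2*(C1-B1)^2 := by
    rw [hsumA]; exact Real.sq_sqrt halA.le
  have hxB2 : (gC+gA)^2 = B2*(A0-C0)^2 + A2*(A1-C1)^2 := by
    rw [hsumB]; exact Real.sq_sqrt halB.le
  have htCx : tC * (gA + gB) = gA := by rw [hsumC, hgA_AB]; ring
  have htAx : tA * (gB + gC) = gB := by rw [hsumA, hgB_BC]; ring
  have htBx : tB * (gC + gA) = gC := by rw [hsumB, hgC_CA]; ring
  -- lambda-inner products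
  have hmAB : B2*A0*B0 + A2*A1*B1 = A2*B2 - gA*gB := by
    linear_combination (1/2)*hxC2 - (1/2)*hgA2 - (1/2)*hgB2
  have hmBC : B2*B0*C0 + A2*B1*C1 = A2*B2 - gB*gC := by
    linear_combination (1/2)*hxA2 - (1/2)*hgB2 - (1/2)*hgC2
  have hmCA : B2*C0*A0 + A2*C1*A1 = A2*B2 - gC*gA := by
    linear_combination (1/2)*hxB2 - (1/2)*hgC2 - (1/2)*hgA2
  have eA : A2*B2 + gA^2 = B2*A0^2 + A2*A1^2 := by rw [hgA2]; ring
  have eB : A2*B2 + gB^2 = B2*B0^2 + A2*B1^2 := by rw [hgB2]; ring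
  have eC : A2*B2 + gC^2 = B2*C0^2 + A2*C1^2 := by rw [hgC2]; ring
  -- crosses
  have hcab2 : (A0*B1 - A1*B0)^2 = (gA+gB)^2 := by
    have hc2 : (A2*B2)*((A0*B1 - A1*B0)^2) = (A2*B2)*((gA+gB)^2) := by
      linear_combination (-(B2*B0^2+A2*B1^2))*eA - (A2*B2+gA^2)*eB
        - (B2*A0*B0+A2*A1*B1 + A2*B2 - gA*gB)*hmAB
    exact mul_left_cancel₀ (by positivity) hc2
  have hcbc2 : (B0*C1 - B1*C0)^2 = (gB+gC)^2 := by
    have hc2 : (A2*B2)*((B0*C1 - B1*C0)^2) = (A2*B2)*((gB+gC)^2) := by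
      linear_combination (-(B2*C0^2+A2*C1^2))*eB - (A2*B2+gB^2)*eC
        - (B2*B0*C0+A2*B1*C1 + A2*B2 - gB*gC)*hmBC
    exact mul_left_cancel₀ (by positivity) hc2
  have hcca2 : (C0*A1 - C1*A0)^2 = (gC+gA)^2 := by
    have hc2 : (A2*B2)*((C0*A1 - C1*A0)^2) = (A2*B2)*((gC+gA)^2) := by
      linear_combination (-(B2*A0^2+A2*A1^2))*eC - (A2*B2+gC^2)*eA
        - (B2*C0*A0+A2*C1*A1 + A2*B2 - gC*gA)*hmCA
    exact mul_left_cancel₀ (by positivity) hc2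
  -- E-inner products via tangent lengths
  have hc3AB : (b^2*A0*B0 + a^2*A1*B1)^2 = (a^2*b^2)^2 - a^2*b^2*(gA+gB)^2 := by
    linear_combination (b^2*B0^2+a^2*B1^2)*hpA + (a^2*b^2)*hpB - (a^2*b^2)*hcab2
  have hc3BC : (b^2*B0*C0 + a^2*B1*C1)^2 = (a^2*b^2)^2 - a^2*b^2*(gB+gC)^2 := by
    linear_combination (b^2*C0^2+a^2*C1^2)*hpB + (a^2*b^2)*hpC - (a^2*b^2)*hcbc2
  have hc3CA : (b^2*C0*A0 + a^2*C1*A1)^2 = (a^2*b^2)^2 - a^2*b^2*(gC+gA)^2 := by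
    linear_combination (b^2*A0^2+a^2*A1^2)*hpC + (a^2*b^2)*hpA - (a^2*b^2)*hcca2
  -- side lengths
  have hlC2 : (lC P)^2 = (A0 - B0)^2 + (A1 - B1)^2 := by
    have h := norm_sq_pt (P 0 - P 1)
    simp only [PiLp.sub_apply] at h
    rw [hA0, hB0, hA1, hB1]
    exact h
  have hlA2 : (lA P)^2 = (B0 - C0)^2 + (B1 - C1)^2 := by
    have h := norm_sq_pt (P 1 - P 2)
    simp only [PiLp.sub_apply] at h
    rw [hB0, hC0, hB1, hC1]
    exact h
  have hlB2 : (lB P)^2 = (C0 - A0)^2 + (C1 - A1)^2 := by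
    have h := norm_sq_pt (P 2 - P 0)
    simp only [PiLp.sub_apply] at h
    rw [hC0, hA0, hC1, hA1]
    exact h
  have hlCpos : 0 < lC P := norm_pos_iff.mpr (sub_ne_zero_of_ne (Ne.symm h10))
  have hlApos : 0 < lA P := norm_pos_iff.mpr (sub_ne_zero_of_ne (Ne.symm h21))
  have hlBpos : 0 < lB P := norm_pos_iff.mpr (sub_ne_zero_of_ne (Ne.symm h02))
  set LA := Real.sqrt lam * lA P with hLAdef
  set LB := Real.sqrt lam * lB P with hLBdef
  set LC := Real.sqrt lam * lC P with hLCdef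
  have hsl : Real.sqrt lam ^ 2 = lam := Real.sq_sqrt hlam0.le
  have hslne : Real.sqrt lam ≠ 0 := by positivity
  -- per-side length relations
  have H1AB : lam*(lC P)^2 + (gA+gB)^2 = 2*a^2*b^2 - 2*(b^2*A0*B0 + a^2*A1*B1) := by
    linear_combination lam*hlC2 + hxC2 + hpA + hpB + ((A1-B1)^2)*hA2def + ((A0-B0)^2)*hB2def
  have H1BC : lam*(lA P)^2 + (gB+gC)^2 = 2*a^2*b^2 - 2*(b^2*B0*C0 + a^2*B1*C1) := by
    linear_combination lam*hlA2 + hxA2 + hpB + hpC + ((B1-C1)^2)*hA2def + ((B0-C0)^2)*hB2def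
  have H1CA : lam*(lB P)^2 + (gC+gA)^2 = 2*a^2*b^2 - 2*(b^2*C0*A0 + a^2*C1*A1) := by
    linear_combination lam*hlB2 + hxB2 + hpC + hpA + ((C1-A1)^2)*hA2def + ((C0-A0)^2)*hB2def
  have hLCrelAB : (lam*(lC P)^2 + (gA+gB)^2)^2 = 4*(a^2*b^2)*(lam*(lC P)^2) := by
    linear_combination (lam*(lC P)^2 + (gA+gB)^2 - 2*a^2*b^2 - 2*(b^2*A0*B0+a^2*A1*B1))*H1AB + 4*hc3AB
  have hLCrelBC : (lam*(lA P)^2 + (gB+gC)^2)^2 = 4*(a^2*b^2)*(lam*(lA P)^2) := by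
    linear_combination (lam*(lA P)^2 + (gB+gC)^2 - 2*a^2*b^2 - 2*(b^2*B0*C0+a^2*B1*C1))*H1BC + 4*hc3BC
  have hLCrelCA : (lam*(lB P)^2 + (gC+gA)^2)^2 = 4*(a^2*b^2)*(lam*(lB P)^2) := by
    linear_combination (lam*(lB P)^2 + (gC+gA)^2 - 2*a^2*b^2 - 2*(b^2*C0*A0+a^2*C1*A1))*H1CA + 4*hc3CA
  have hLCval : lam*(lC P)^2 + (gA+gB)^2 = 2*a*b*LC := by
    have hv2 : (2*a*b*LC)^2 = 4*(a^2*b^2)*(lam*(lC P)^2) := by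
      rw [hLCdef]; linear_combination (4*a^2*b^2*(lC P)^2)*hsl
    have hfac : ((lam*(lC P)^2+(gA+gB)^2) - 2*a*b*LC)*((lam*(lC P)^2+(gA+gB)^2) + 2*a*b*LC) = 0 := by
      linear_combination hLCrelAB - hv2
    rcases mul_eq_zero.mp hfac with h|h
    · linarith
    · exfalso
      have h1 : 0 < lam*(lC P)^2 := mul_pos hlam0 (pow_pos hlCpos 2)
      have h2 : 0 ≤ 2*a*b*LC := by
        have : 0 ≤ LC := by rw [hLCdef]; positivity
        positivity
      linarith [sq_nonneg (gA+gB)]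
  have hLAval : lam*(lA P)^2 + (gB+gC)^2 = 2*a*b*LA := by
    have hv2 : (2*a*b*LA)^2 = 4*(a^2*b^2)*(lam*(lA P)^2) := by
      rw [hLAdef]; linear_combination (4*a^2*b^2*(lA P)^2)*hsl
    have hfac : ((lam*(lA P)^2+(gB+gC)^2) - 2*a*b*LA)*((lam*(lA P)^2+(gB+gC)^2) + 2*a*b*LA) = 0 := by
      linear_combination hLCrelBC - hv2
    rcases mul_eq_zero.mp hfac with h|h
    · linarith
    · exfalso
      have h1 : 0 < lam*(lA P)^2 := mul_pos hlam0 (pow_pos hlApos 2)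
      have h2 : 0 ≤ 2*a*b*LA := by
        have : 0 ≤ LA := by rw [hLAdef]; positivity
        positivity
      linarith [sq_nonneg (gB+gC)]
  have hLBval : lam*(lB P)^2 + (gC+gA)^2 = 2*a*b*LB := by
    have hv2 : (2*a*b*LB)^2 = 4*(a^2*b^2)*(lam*(lB P)^2) := by
      rw [hLBdef]; linear_combination (4*a^2*b^2*(lB P)^2)*hsl
    have hfac : ((lam*(lB P)^2+(gC+gA)^2) - 2*a*b*LB)*((lam*(lB P)^2+(gC+gA)^2) + 2*a*b*LB) = 0 := by
      linear_combination hLCrelCA - hv2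
    rcases mul_eq_zero.mp hfac with h|h
    · linarith
    · exfalso
      have h1 : 0 < lam*(lB P)^2 := mul_pos hlam0 (pow_pos hlBpos 2)
      have h2 : 0 ≤ 2*a*b*LB := by
        have : 0 ≤ LB := by rw [hLBdef]; positivity
        positivity
      linarith [sq_nonneg (gC+gA)]
  have hcbarAB : b^2*A0*B0 + a^2*A1*B1 = a*b*(a*b - LC) := by
    linear_combination (1/2)*H1AB - (1/2)*hLCval
  have hcbarBC : b^2*B0*C0 + a^2*B1*C1 = a*b*(a*b - LA) := by
    linear_combination (1/2)*H1BC - (1/2)*hLAval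
  have hcbarCA : b^2*C0*A0 + a^2*C1*A1 = a*b*(a*b - LB) := by
    linear_combination (1/2)*H1CA - (1/2)*hLBval
  -- Cramer identities
  have hCr0 : (B0*C1 - B1*C0)*A0 + (C0*A1 - C1*A0)*B0 + (A0*B1 - A1*B0)*C0 = 0 := by ring
  have hCr1 : (B0*C1 - B1*C0)*A1 + (C0*A1 - C1*A0)*B1 + (A0*B1 - A1*B0)*C1 = 0 := by ring
  -- lambda-rows
  have RA : (B0*C1-B1*C0)*(A2*B2+gA^2) + (C0*A1-C1*A0)*(A2*B2-gA*gB)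
      + (A0*B1-A1*B0)*(A2*B2-gC*gA) = 0 := by
    linear_combination (B2*A0)*hCr0 + (A2*A1)*hCr1 + (B0*C1-B1*C0)*eA
      - (C0*A1-C1*A0)*hmAB - (A0*B1-A1*B0)*hmCA
  have RB : (B0*C1-B1*C0)*(A2*B2-gA*gB) + (C0*A1-C1*A0)*(A2*B2+gB^2)
      + (A0*B1-A1*B0)*(A2*B2-gB*gC) = 0 := by
    linear_combination (B2*B0)*hCr0 + (A2*B1)*hCr1 - (B0*C1-B1*C0)*hmAB
      + (C0*A1-C1*A0)*eB - (A0*B1-A1*B0)*hmBC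
  have RC : (B0*C1-B1*C0)*(A2*B2-gC*gA) + (C0*A1-C1*A0)*(A2*B2-gB*gC)
      + (A0*B1-A1*B0)*(A2*B2+gC^2) = 0 := by
    linear_combination (B2*C0)*hCr0 + (A2*C1)*hCr1 - (B0*C1-B1*C0)*hmCA
      - (C0*A1-C1*A0)*hmBC + (A0*B1-A1*B0)*eC
  have hD1 : (B0*C1-B1*C0)*gA*(gA+gB) - (C0*A1-C1*A0)*gB*(gA+gB)
      + (A0*B1-A1*B0)*gC*(gB-gA) = 0 := by linear_combination RA - RB
  have hD2 : (B0*C1-B1*C0)*gA*(gC-gB) + (C0*A1-C1*A0)*gB*(gB+gC)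
      - (A0*B1-A1*B0)*gC*(gB+gC) = 0 := by linear_combination RB - RC
  -- sign disjunctions
  have hbcor : (B0*C1-B1*C0) = (gB+gC) ∨ (B0*C1-B1*C0) = -(gB+gC) := by
    have hf : ((B0*C1-B1*C0) - (gB+gC))*((B0*C1-B1*C0) + (gB+gC)) = 0 := by
      linear_combination hcbc2
    rcases mul_eq_zero.mp hf with h|h
    · exact Or.inl (sub_eq_zero.mp h)
    · exact Or.inr (eq_neg_of_add_eq_zero_left h)
  have hcaor : (C0*A1-C1*A0) = (gC+gA) ∨ (C0*A1-C1*A0) = -(gC+gA) := by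
    have hf : ((C0*A1-C1*A0) - (gC+gA))*((C0*A1-C1*A0) + (gC+gA)) = 0 := by
      linear_combination hcca2
    rcases mul_eq_zero.mp hf with h|h
    · exact Or.inl (sub_eq_zero.mp h)
    · exact Or.inr (eq_neg_of_add_eq_zero_left h)
  have habor : (A0*B1-A1*B0) = (gA+gB) ∨ (A0*B1-A1*B0) = -(gA+gB) := by
    have hf : ((A0*B1-A1*B0) - (gA+gB))*((A0*B1-A1*B0) + (gA+gB)) = 0 := by
      linear_combination hcab2
    rcases mul_eq_zero.mp hf with h|h
    · exact Or.inl (sub_eq_zero.mp h)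
    · exact Or.inr (eq_neg_of_add_eq_zero_left h)
  obtain ⟨e, he, hbc, hca, hab2⟩ : ∃ e : ℝ, (e = 1 ∨ e = -1) ∧
      (B0*C1-B1*C0) = e*(gB+gC) ∧ (C0*A1-C1*A0) = e*(gC+gA) ∧ (A0*B1-A1*B0) = e*(gA+gB) := by
    rcases hbcor with h1|h1 <;> rcases hcaor with h2|h2 <;> rcases habor with h3|h3
    · exact ⟨1, Or.inl rfl, by rw [h1]; ring, by rw [h2]; ring, by rw [h3]; ring⟩
    · exfalso; rw [h1, h2, h3] at hD2
      have hz : gC*((gA+gB)*(gB+gC)) = 0 := by linear_combination (1/2)*hD2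
      exact (mul_pos hgC (mul_pos (add_pos hgA hgB) (add_pos hgB hgC))).ne' hz
    · exfalso; rw [h1, h2, h3] at hD1
      have hz : gB*((gC+gA)*(gA+gB)) = 0 := by linear_combination (1/2)*hD1
      exact (mul_pos hgB (mul_pos (add_pos hgC hgA) (add_pos hgA hgB))).ne' hz
    · exfalso; rw [h1, h2, h3] at hD1
      have hz : gA*((gB+gC)*(gA+gB)) = 0 := by linear_combination (1/2)*hD1
      exact (mul_pos hgA (mul_pos (add_pos hgB hgC) (add_pos hgA hgB))).ne' hz
    · exfalso; rw [h1, h2, h3] at hD1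
      have hz : gA*((gB+gC)*(gA+gB)) = 0 := by linear_combination (-1/2)*hD1
      exact (mul_pos hgA (mul_pos (add_pos hgB hgC) (add_pos hgA hgB))).ne' hz
    · exfalso; rw [h1, h2, h3] at hD1
      have hz : gB*((gC+gA)*(gA+gB)) = 0 := by linear_combination (-1/2)*hD1
      exact (mul_pos hgB (mul_pos (add_pos hgC hgA) (add_pos hgA hgB))).ne' hz
    · exfalso; rw [h1, h2, h3] at hD2
      have hz : gC*((gA+gB)*(gB+gC)) = 0 := by linear_combination (-1/2)*hD2
      exact (mul_pos hgC (mul_pos (add_pos hgA hgB) (add_pos hgB hgC))).ne' hz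
    · exact ⟨-1, Or.inr rfl, by rw [h1]; ring, by rw [h2]; ring, by rw [h3]; ring⟩
  -- E-rows
  have SA : (B0*C1-B1*C0)*(a^2*b^2) + (C0*A1-C1*A0)*(b^2*A0*B0+a^2*A1*B1)
      + (A0*B1-A1*B0)*(b^2*C0*A0+a^2*C1*A1) = 0 := by
    linear_combination (b^2*A0)*hCr0 + (a^2*A1)*hCr1 - (B0*C1-B1*C0)*hpA
  have SB : (B0*C1-B1*C0)*(b^2*A0*B0+a^2*A1*B1) + (C0*A1-C1*A0)*(a^2*b^2)
      + (A0*B1-A1*B0)*(b^2*B0*C0+a^2*B1*C1) = 0 := by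
    linear_combination (b^2*B0)*hCr0 + (a^2*B1)*hCr1 - (C0*A1-C1*A0)*hpB
  have SC : (B0*C1-B1*C0)*(b^2*C0*A0+a^2*C1*A1) + (C0*A1-C1*A0)*(b^2*B0*C0+a^2*B1*C1)
      + (A0*B1-A1*B0)*(a^2*b^2) = 0 := by
    linear_combination (b^2*C0)*hCr0 + (a^2*C1)*hCr1 - (A0*B1-A1*B0)*hpC
  rw [hbc, hca, hab2, hcbarAB, hcbarCA] at SA
  rw [hbc, hca, hab2, hcbarAB, hcbarBC] at SB
  rw [hbc, hca, hab2, hcbarCA, hcbarBC] at SC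
  have hXA : (gB+gC)*(a^2*b^2) + (gC+gA)*(a*b*(a*b-LC)) + (gA+gB)*(a*b*(a*b-LB)) = 0 := by
    rcases he with h|h <;> rw [h] at SA <;>
      first | linear_combination SA | linear_combination -SA
  have hXB : (gB+gC)*(a*b*(a*b-LC)) + (gC+gA)*(a^2*b^2) + (gA+gB)*(a*b*(a*b-LA)) = 0 := by
    rcases he with h|h <;> rw [h] at SB <;>
      first | linear_combination SB | linear_combination -SB
  have hXC : (gB+gC)*(a*b*(a*b-LB)) + (gC+gA)*(a*b*(a*b-LA)) + (gA+gB)*(a^2*b^2) = 0 := by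
    rcases he with h|h <;> rw [h] at SC <;>
      first | linear_combination SC | linear_combination -SC
  -- key identities
  have habne : (a*b) ≠ 0 := by positivity
  have key3 : a*b*((LA+LC-LB)*(gA+gB)) = a*b*(2*LC*gA) := by
    linear_combination hXA - hXB
  have key1 : a*b*((LB+LA-LC)*(gB+gC)) = a*b*(2*LA*gB) := by
    linear_combination hXB - hXC
  have key2 : a*b*((LC+LB-LA)*(gC+gA)) = a*b*(2*LB*gC) := by
    linear_combination hXC - hXA
  have key3' := mul_left_cancel₀ habne key3
  have key1' := mul_left_cancel₀ habne key1
  have key2' := mul_left_cancel₀ habne key2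
  have key3l : (lA P + lC P - lB P)*(gA+gB) = 2*(lC P)*gA := by
    apply mul_left_cancel₀ hslne
    rw [hLAdef, hLBdef, hLCdef] at key3'
    linear_combination key3'
  have key1l : (lB P + lA P - lC P)*(gB+gC) = 2*(lA P)*gB := by
    apply mul_left_cancel₀ hslne
    rw [hLAdef, hLBdef, hLCdef] at key1'
    linear_combination key1'
  have key2l : (lC P + lB P - lA P)*(gC+gA) = 2*(lB P)*gC := by
    apply mul_left_cancel₀ hslne
    rw [hLAdef, hLBdef, hLCdef] at key2'
    linear_combination key2'
  -- final scalar equalities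
  have scalar3 : (sper P - lB P)/(lC P) = tC := by
    rw [div_eq_iff (ne_of_gt hlCpos)]
    have hb1 : (gA+gB)*((lA P + lC P - lB P) - 2*(tC*(lC P))) = 0 := by
      linear_combination key3l - 2*(lC P)*htCx
    have hb2 : (lA P + lC P - lB P) - 2*(tC*(lC P)) = 0 := by
      rcases mul_eq_zero.mp hb1 with h|h
      · exact absurd h (ne_of_gt (add_pos hgA hgB))
      · exact h
    simp only [sper]; linarith
  have scalar1 : (sper P - lC P)/(lA P) = tA := by
    rw [div_eq_iff (ne_of_gt hlApos)]
    have hb1 : (gB+gC)*((lB P + lA P - lC P) - 2*(tA*(lA P))) = 0 := by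
      linear_combination key1l - 2*(lA P)*htAx
    have hb2 : (lB P + lA P - lC P) - 2*(tA*(lA P)) = 0 := by
      rcases mul_eq_zero.mp hb1 with h|h
      · exact absurd h (ne_of_gt (add_pos hgB hgC))
      · exact h
    simp only [sper]; linarith
  have scalar2 : (sper P - lA P)/(lB P) = tB := by
    rw [div_eq_iff (ne_of_gt hlBpos)]
    have hb1 : (gC+gA)*((lC P + lB P - lA P) - 2*(tB*(lB P))) = 0 := by
      linear_combination key2l - 2*(lB P)*htBx
    have hb2 : (lC P + lB P - lA P) - 2*(tB*(lB P)) = 0 := by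
      rcases mul_eq_zero.mp hb1 with h|h
      · exact absurd h (ne_of_gt (add_pos hgC hgA))
      · exact h
    simp only [sper]; linarith
  refine ⟨?_, ?_, ?_⟩
  · rw [scalar1]; exact hmemBC
  · rw [scalar2]; exact hmemCA
  · rw [scalar3]; exact hmemAB
end
end

section
/- For every 3-periodic billiard orbit of E with vertices A, B, C: r/R = γ·L − 4, where r = Δ/s is the inradius, R = ℓ_A ℓ_B ℓ_C/(4Δ) the circumradius, L = ℓ_A + ℓ_B + ℓ_C the perimeter, and γ = (1/2)·(u_{i−1}·∇f(P i)) the Joachimsthal constant of the orbit. -/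
open scoped RealInnerProductSpace

noncomputable section

lemma inner_eq (p q : Pt) : ⟪p, q⟫ = p 0 * q 0 + p 1 * q 1 := by
  simp [PiLp.inner_apply, Fin.sum_univ_two, RCLike.inner_apply]
  ring

lemma norm_sq_eq (p : Pt) : ‖p‖ ^ 2 = p 0 ^ 2 + p 1 ^ 2 := by
  rw [EuclideanSpace.norm_eq, Real.sq_sqrt (by positivity)]
  simp [Fin.sum_univ_two, sq_abs]

/-- Key side relation from the Joachimsthal hypothesis. -/
lemma side_rel (a b : ℝ) (ha : a ≠ 0) (hb : b ≠ 0) (p q : Pt) (hpq : q ≠ p)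
    (hq : fE a b q = 1) (γ : ℝ)
    (h : (1 / 2) * ⟪uvec p q, gradE a b q⟫ = γ) :
    p 0 * q 0 / a ^ 2 + p 1 * q 1 / b ^ 2 = 1 - γ * ‖q - p‖ := by
  have hd : q - p ≠ 0 := sub_ne_zero.mpr hpq
  have hn : (0:ℝ) < ‖q - p‖ := norm_pos_iff.mpr hd
  have hip : ⟪uvec p q, gradE a b q⟫
      = ‖q - p‖⁻¹ * ((q 0 - p 0) * (2 * q 0 / a ^ 2) + (q 1 - p 1) * (2 * q 1 / b ^ 2)) := by
    rw [uvec, real_inner_smul_left, inner_eq]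
    have h0 : (q - p) 0 = q 0 - p 0 := by simp
    have h1 : (q - p) 1 = q 1 - p 1 := by simp
    rw [h0, h1]; rfl
  rw [hip] at h
  have hn' : ‖q - p‖ ≠ 0 := ne_of_gt hn
  have hE : (q 0 - p 0) * (2 * q 0 / a ^ 2) + (q 1 - p 1) * (2 * q 1 / b ^ 2)
      = 2 * (γ * ‖q - p‖) := by
    field_simp at h ⊢
    linear_combination h
  have hq' : q 0 ^ 2 / a ^ 2 + q 1 ^ 2 / b ^ 2 = 1 := hq
  linear_combination hq' - (1/2 : ℝ) * hE

/-- positivity of the quadratic form on a nonzero vector -/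
lemma quad_pos (a b : ℝ) (ha : (0:ℝ) < a) (hb : (0:ℝ) < b) (d : Pt) (hd : d ≠ 0) :
    0 < (d 0) ^ 2 / a ^ 2 + (d 1) ^ 2 / b ^ 2 := by
  have hn : (0:ℝ) < ‖d‖ := norm_pos_iff.mpr hd
  have h2 : 0 < d 0 ^ 2 + d 1 ^ 2 := by
    have := norm_sq_eq d
    nlinarith
  have ha2 : (0:ℝ) < a ^ 2 := by positivity
  have hb2 : (0:ℝ) < b ^ 2 := by positivity
  rcases lt_or_ge 0 (d 0 ^ 2) with h0 | h0
  · have : (0:ℝ) < d 0 ^ 2 / a ^ 2 := by positivity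
    have : (0:ℝ) ≤ d 1 ^ 2 / b ^ 2 := by positivity
    linarith
  · have h00 : d 0 ^ 2 = 0 := le_antisymm h0 (sq_nonneg _)
    have h1 : 0 < d 1 ^ 2 := by nlinarith
    have : (0:ℝ) < d 1 ^ 2 / b ^ 2 := by positivity
    have : (0:ℝ) ≤ d 0 ^ 2 / a ^ 2 := by positivity
    linarith

/-- Gram determinant of three unit-norm plane vectors vanishes. -/
lemma gram (u0 v0 u1 v1 u2 v2 p01 p12 p20 : ℝ)
    (h0 : u0 ^ 2 + v0 ^ 2 = 1) (h1 : u1 ^ 2 + v1 ^ 2 = 1) (h2 : u2 ^ 2 + v2 ^ 2 = 1)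
    (e01 : u0 * u1 + v0 * v1 = p01) (e12 : u1 * u2 + v1 * v2 = p12)
    (e20 : u2 * u0 + v2 * v0 = p20) :
    1 + 2 * p01 * p12 * p20 - p01 ^ 2 - p12 ^ 2 - p20 ^ 2 = 0 := by
  subst e01 e12 e20
  linear_combination ((u1 * u2 + v1 * v2) ^ 2 - 1) * h0
    + ((u2 * u0 + v2 * v0) ^ 2 - (u0 ^ 2 + v0 ^ 2)) * h1
    + ((u0 * u1 + v0 * v1) ^ 2 - (u0 ^ 2 + v0 ^ 2) * (u1 ^ 2 + v1 ^ 2)) * h2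

/-- r/R = γ·L − 4 for every 3-periodic orbit. -/
theorem rR_eq_gammaL_sub_four (a b : ℝ) (hb : 0 < b) (hab : b ≤ a)
    (P : ZMod 3 → Pt) (hP : IsOrbit a b P) (γ : ℝ)
    (hγ : ∀ i : ZMod 3, joach a b P i = γ) :
    inradius P / circumradius P = γ * (lA P + lB P + lC P) - 4 := by
  obtain ⟨hf, hne, -⟩ := hP
  have ha : (0:ℝ) < a := lt_of_lt_of_le hb hab
  have ha' : a ≠ 0 := ne_of_gt ha
  have hb' : b ≠ 0 := ne_of_gt hb
  -- distinct consecutive vertices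
  have h10 : P 1 ≠ P 0 := by have := hne 0; rwa [zero_add] at this
  have h21 : P 2 ≠ P 1 := by
    have := hne 1; rwa [show (1:ZMod 3) + 1 = 2 by decide] at this
  have h02 : P 0 ≠ P 2 := by
    have := hne 2; rwa [show (2:ZMod 3) + 1 = 0 by decide] at this
  -- Joachimsthal relations at the three vertices
  have j1 : (1 / 2) * ⟪uvec (P 0) (P 1), gradE a b (P 1)⟫ = γ := by
    have := hγ 1; rwa [joach, show (1:ZMod 3) - 1 = 0 by decide] at this
  have j2 : (1 / 2) * ⟪uvec (P 1) (P 2), gradE a b (P 2)⟫ = γ := by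
    have := hγ 2; rwa [joach, show (2:ZMod 3) - 1 = 1 by decide] at this
  have j0 : (1 / 2) * ⟪uvec (P 2) (P 0), gradE a b (P 0)⟫ = γ := by
    have := hγ 0; rwa [joach, show (0:ZMod 3) - 1 = 2 by decide] at this
  set la := lA P with hla_def
  set lb' := lB P with hlb_def
  set lc := lC P with hlc_def
  have hnc : ‖P 1 - P 0‖ = lc := by rw [hlc_def, lC, norm_sub_rev]
  have hna : ‖P 2 - P 1‖ = la := by rw [hla_def, lA, norm_sub_rev]
  have hnb : ‖P 0 - P 2‖ = lb' := by rw [hlb_def, lB, norm_sub_rev]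
  have hlc_pos : (0:ℝ) < lc := by
    rw [← hnc]; exact norm_pos_iff.mpr (sub_ne_zero.mpr h10)
  have hla_pos : (0:ℝ) < la := by
    rw [← hna]; exact norm_pos_iff.mpr (sub_ne_zero.mpr h21)
  have hlb_pos : (0:ℝ) < lb' := by
    rw [← hnb]; exact norm_pos_iff.mpr (sub_ne_zero.mpr h02)
  -- side relations
  have s01 : P 0 0 * P 1 0 / a ^ 2 + P 0 1 * P 1 1 / b ^ 2 = 1 - γ * lc := by
    have := side_rel a b ha' hb' (P 0) (P 1) h10 (hf 1) γ j1
    rwa [hnc] at this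
  have s12 : P 1 0 * P 2 0 / a ^ 2 + P 1 1 * P 2 1 / b ^ 2 = 1 - γ * la := by
    have := side_rel a b ha' hb' (P 1) (P 2) h21 (hf 2) γ j2
    rwa [hna] at this
  have s20 : P 2 0 * P 0 0 / a ^ 2 + P 2 1 * P 0 1 / b ^ 2 = 1 - γ * lb' := by
    have := side_rel a b ha' hb' (P 2) (P 0) h02 (hf 0) γ j0
    rwa [hnb] at this
  -- on-ellipse coordinate equations
  have h0 : (P 0 0) ^ 2 / a ^ 2 + (P 0 1) ^ 2 / b ^ 2 = 1 := hf 0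
  have h1 : (P 1 0) ^ 2 / a ^ 2 + (P 1 1) ^ 2 / b ^ 2 = 1 := hf 1
  have h2 : (P 2 0) ^ 2 / a ^ 2 + (P 2 1) ^ 2 / b ^ 2 = 1 := hf 2
  -- γ is positive
  have hγpos : (0:ℝ) < γ := by
    have hQ := quad_pos a b ha hb (P 1 - P 0) (sub_ne_zero.mpr h10)
    have hc0 : (P 1 - P 0) 0 = P 1 0 - P 0 0 := by simp
    have hc1 : (P 1 - P 0) 1 = P 1 1 - P 0 1 := by simp
    rw [hc0, hc1] at hQ
    have hQ2 : (P 1 0 - P 0 0) ^ 2 / a ^ 2 + (P 1 1 - P 0 1) ^ 2 / b ^ 2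
        = 2 * (γ * lc) := by linear_combination h0 + h1 - 2 * s01
    nlinarith [hQ, hQ2, hlc_pos]
  -- Gram determinant relation
  have hdet : 1 + 2 * (1 - γ * lc) * (1 - γ * la) * (1 - γ * lb')
      - (1 - γ * lc) ^ 2 - (1 - γ * la) ^ 2 - (1 - γ * lb') ^ 2 = 0 := by
    refine gram (P 0 0 / a) (P 0 1 / b) (P 1 0 / a) (P 1 1 / b) (P 2 0 / a) (P 2 1 / b)
      _ _ _ ?_ ?_ ?_ ?_ ?_ ?_
    · linear_combination h0
    · linear_combination h1
    · linear_combination h2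
    · linear_combination s01
    · linear_combination s12
    · linear_combination s20
  have hS : 2 * (la * lb' + lb' * lc + lc * la) - la ^ 2 - lb' ^ 2 - lc ^ 2
      - 2 * γ * (la * lb' * lc) = 0 := by
    have hfac : γ ^ 2 * (2 * (la * lb' + lb' * lc + lc * la) - la ^ 2 - lb' ^ 2 - lc ^ 2
        - 2 * γ * (la * lb' * lc)) = 0 := by linear_combination hdet
    rcases mul_eq_zero.mp hfac with h | h
    · exact absurd h (pow_ne_zero 2 (ne_of_gt hγpos))
    · exact h
  -- coordinate formulas for squared side lengths
  have hla2 : la ^ 2 = (P 1 0 - P 2 0) ^ 2 + (P 1 1 - P 2 1) ^ 2 := by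
    rw [hla_def, lA, norm_sq_eq]; simp
  have hlb2 : lb' ^ 2 = (P 2 0 - P 0 0) ^ 2 + (P 2 1 - P 0 1) ^ 2 := by
    rw [hlb_def, lB, norm_sq_eq]; simp
  have hlc2 : lc ^ 2 = (P 0 0 - P 1 0) ^ 2 + (P 0 1 - P 1 1) ^ 2 := by
    rw [hlc_def, lC, norm_sq_eq]; simp
  -- area
  set d := areaT P with hd_def
  have hcr : cross (P 1 - P 0) (P 2 - P 0)
      = (P 1 0 - P 0 0) * (P 2 1 - P 0 1) - (P 1 1 - P 0 1) * (P 2 0 - P 0 0) := by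
    simp [cross]
  have hd2 : d ^ 2 = ((P 1 0 - P 0 0) * (P 2 1 - P 0 1)
      - (P 1 1 - P 0 1) * (P 2 0 - P 0 0)) ^ 2 / 4 := by
    rw [hd_def, areaT, hcr, div_pow, sq_abs]; norm_num
  have hHeron : 16 * d ^ 2 = 2 * (la ^ 2 * lb' ^ 2) + 2 * (lb' ^ 2 * lc ^ 2)
      + 2 * (lc ^ 2 * la ^ 2) - (la ^ 2) ^ 2 - (lb' ^ 2) ^ 2 - (lc ^ 2) ^ 2 := by
    rw [hd2, hla2, hlb2, hlc2]; ring
  have hT : (-la + lb' + lc) * (la - lb' + lc) * (la + lb' - lc)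
      = 2 * (la * lb' * lc) * (γ * (la + lb' + lc) - 4) := by
    linear_combination (la + lb' + lc) * hS
  have hKey : 4 * d ^ 2 = ((la + lb' + lc) / 2) * (la * lb' * lc)
      * (γ * (la + lb' + lc) - 4) := by
    linear_combination (1/4 : ℝ) * hHeron + ((la + lb' + lc) / 4) * hT
  -- final computation
  have hL_pos : (0:ℝ) < la + lb' + lc := by linarith
  have hK_pos : (0:ℝ) < la * lb' * lc := mul_pos (mul_pos hla_pos hlb_pos) hlc_pos
  rw [inradius, circumradius, sper, ← hla_def, ← hlb_def, ← hlc_def, ← hd_def]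
  have hhalf : (0:ℝ) < (la + lb' + lc) / 2 := by linarith
  rcases eq_or_ne d 0 with hd0 | hd0
  · rw [hd0]
    have h4 : γ * (la + lb' + lc) - 4 = 0 := by
      rw [hd0] at hKey
      have h0' : ((la + lb' + lc) / 2)
          * ((la * lb' * lc) * (γ * (la + lb' + lc) - 4)) = 0 := by
        linear_combination -hKey
      rcases mul_eq_zero.mp h0' with h | h
      · exact absurd h (ne_of_gt hhalf)
      · rcases mul_eq_zero.mp h with h' | h'
        · exact absurd h' (ne_of_gt hK_pos)
        · exact h'
    rw [h4]
    simp
  · have hs_ne : (la + lb' + lc) / 2 ≠ 0 := ne_of_gt hhalf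
    have hK_ne : la * lb' * lc ≠ 0 := ne_of_gt hK_pos
    have h4d : (4:ℝ) * d ≠ 0 := mul_ne_zero (by norm_num) hd0
    field_simp
    linear_combination 2 * hKey
end
end

section
/- Any two 3-periodic billiard orbits of the same ellipse E have equal product of cosines of the angles of their Excentral Triangles: if (A,B,C) and (A′,B′,C′) are both 3-periodic billiard orbits of E, with excenters J_A = (−ℓ_A·A + ℓ_B·B + ℓ_C·C)/(−ℓ_A + ℓ_B + ℓ_C), J_B, J_C (cyclically) and J_{A′}, J_{B′}, J_{C′} respectively, then cos φ_A · cos φ_B · cos φ_C = cos φ_{A′} · cos φ_{B′} · cos φ_{C′}, where φ_A is the angle of the triangle J_A J_B J_C at J_A, i.e., cos φ_A = ((J_B − J_A)/‖J_B − J_A‖)·((J_C − J_A)/‖J_C − J_A‖), and similarly for the other angles. -/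
open scoped RealInnerProductSpace

noncomputable section

/-- excenter J_A = (−ℓ_A·A + ℓ_B·B + ℓ_C·C)/(−ℓ_A + ℓ_B + ℓ_C) -/
def exA (P : ZMod 3 → Pt) : Pt :=
  (-lA P + lB P + lC P)⁻¹ • ((-lA P) • P 0 + lB P • P 1 + lC P • P 2)
/-- excenter J_B -/
def exB (P : ZMod 3 → Pt) : Pt :=
  (lA P - lB P + lC P)⁻¹ • (lA P • P 0 + (-lB P) • P 1 + lC P • P 2)
/-- excenter J_C -/
def exC (P : ZMod 3 → Pt) : Pt :=
  (lA P + lB P - lC P)⁻¹ • (lA P • P 0 + lB P • P 1 + (-lC P) • P 2)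

namespace Inv

/-- quadratic form of the ellipse applied to a vector -/
def Qf (a b : ℝ) (v : Pt) : ℝ := (v 0)^2/a^2 + (v 1)^2/b^2

lemma inner_expand (x y : Pt) : ⟪x, y⟫ = x 0 * y 0 + x 1 * y 1 := by
  simp [PiLp.inner_apply, Fin.sum_univ_two]; ring

lemma norm_sq_expand (x : Pt) : ‖x‖^2 = x 0^2 + x 1^2 := by
  rw [← real_inner_self_eq_norm_sq, inner_expand]; ring

lemma gradE_apply0 (a b : ℝ) (p : Pt) : gradE a b p 0 = 2 * p 0 / a^2 := rfl
lemma gradE_apply1 (a b : ℝ) (p : Pt) : gradE a b p 1 = 2 * p 1 / b^2 := rfl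

lemma inner_grad (a b : ℝ) (v p : Pt) :
    ⟪v, gradE a b p⟫ = 2 * (v 0 * p 0 / a^2 + v 1 * p 1 / b^2) := by
  rw [inner_expand, gradE_apply0, gradE_apply1]; ring

lemma pt_ext {p : Pt} (h0 : p 0 = 0) (h1 : p 1 = 0) : p = 0 := by
  ext i; fin_cases i <;> simpa

lemma ellipse_ne_zero {a b : ℝ} {p : Pt} (h : fE a b p = 1) : p ≠ 0 := by
  intro h0; rw [h0] at h; simp [fE] at h

lemma gradE_ne_zero {a b : ℝ} (ha : 0 < a) (hb : 0 < b) {p : Pt} (hp : p ≠ 0) :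
    gradE a b p ≠ 0 := by
  intro h
  apply hp
  have h0 : gradE a b p 0 = 0 := by rw [h]; rfl
  have h1 : gradE a b p 1 = 0 := by rw [h]; rfl
  rw [gradE_apply0] at h0; rw [gradE_apply1] at h1
  have ha2 : a^2 ≠ 0 := by positivity
  have hb2 : b^2 ≠ 0 := by positivity
  field_simp at h0 h1
  exact pt_ext (by linarith) (by linarith)

lemma Qf_pos {a b : ℝ} (ha : 0 < a) (hb : 0 < b) {v : Pt} (hv : v ≠ 0) :
    0 < Qf a b v := by
  have h : v 0 ≠ 0 ∨ v 1 ≠ 0 := by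
    by_contra h; push_neg at h; exact hv (pt_ext h.1 h.2)
  have h0 : (0:ℝ) ≤ (v 0)^2/a^2 := by positivity
  have h1 : (0:ℝ) ≤ (v 1)^2/b^2 := by positivity
  rcases h with h | h
  · have : (0:ℝ) < (v 0)^2/a^2 := by positivity
    unfold Qf; linarith
  · have : (0:ℝ) < (v 1)^2/b^2 := by positivity
    unfold Qf; linarith

lemma Qf_smul (a b c : ℝ) (v : Pt) : Qf a b (c • v) = c^2 * Qf a b v := by
  unfold Qf
  have h0 : (c • v) 0 = c * v 0 := rfl
  have h1 : (c • v) 1 = c * v 1 := rfl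
  rw [h0, h1]; ring

lemma Qf_neg (a b : ℝ) (v : Pt) : Qf a b (-v) = Qf a b v := by
  unfold Qf
  have h0 : (-v) 0 = -(v 0) := rfl
  have h1 : (-v) 1 = -(v 1) := rfl
  rw [h0, h1]; ring

section Orbit

variable {a b : ℝ} {P : ZMod 3 → Pt}

lemma refl_inner (ha : 0 < a) (hb : 0 < b) (hP : IsOrbit a b P) (i : ZMod 3) :
    ⟪uvec (P i) (P (i+1)), gradE a b (P i)⟫ =
      -⟪uvec (P (i-1)) (P i), gradE a b (P i)⟫ := by
  have hg : gradE a b (P i) ≠ 0 :=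
    gradE_ne_zero ha hb (ellipse_ne_zero (hP.1 i))
  have hgn : ‖gradE a b (P i)‖ ≠ 0 := norm_ne_zero_iff.mpr hg
  have h := hP.2.2 i
  set g := gradE a b (P i)
  set u := uvec (P (i-1)) (P i)
  have : ⟪uvec (P i) (P (i+1)), g⟫ =
      ⟪u - (2 * ⟪u, ‖g‖⁻¹ • g⟫) • (‖g‖⁻¹ • g), g⟫ := by rw [h]
  rw [this, inner_sub_left]
  simp only [real_inner_smul_left, real_inner_smul_right]
  have hgg : ⟪g, g⟫ = ‖g‖ * ‖g‖ := real_inner_self_eq_norm_mul_norm g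
  rw [hgg]
  field_simp
  ring

lemma chord_inner {p q : Pt} (hp : fE a b p = 1) (hq : fE a b q = 1) :
    ⟪q - p, gradE a b q⟫ = -⟪q - p, gradE a b p⟫ := by
  rw [inner_grad, inner_grad]
  have h0 : (q - p) 0 = q 0 - p 0 := rfl
  have h1 : (q - p) 1 = q 1 - p 1 := rfl
  rw [h0, h1]
  unfold fE at hp hq
  linear_combination 2*hq - 2*hp

lemma joach_step (ha : 0 < a) (hb : 0 < b) (hP : IsOrbit a b P) (i : ZMod 3) :
    joach a b P (i+1) = joach a b P i := by
  unfold joach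
  have hi : i + 1 - 1 = i := by ring
  rw [hi]
  have hne : P (i+1) ≠ P i := hP.2.1 i
  have hnn : ‖P (i+1) - P i‖ ≠ 0 := by
    rw [norm_ne_zero_iff, sub_ne_zero]; exact hne
  have huv : uvec (P i) (P (i+1)) = ‖P (i+1) - P i‖⁻¹ • (P (i+1) - P i) := rfl
  have hch : ⟪uvec (P i) (P (i+1)), gradE a b (P (i+1))⟫ =
      -⟪uvec (P i) (P (i+1)), gradE a b (P i)⟫ := by
    rw [huv, real_inner_smul_left, real_inner_smul_left,
      chord_inner (hP.1 i) (hP.1 (i+1))]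
    ring
  rw [hch, refl_inner ha hb hP i]
  ring

lemma side_Q (ha : 0 < a) (hb : 0 < b) (hP : IsOrbit a b P) (i : ZMod 3) :
    Qf a b (P (i+1) - P i) = 2 * joach a b P 0 * ‖P (i+1) - P i‖ := by
  -- joach is constant
  have hc : ∀ j : ZMod 3, joach a b P j = joach a b P 0 := by
    have h1 : joach a b P 1 = joach a b P 0 := by
      have := joach_step ha hb hP 0; simpa using this
    have h2 : joach a b P 2 = joach a b P 0 := by
      have := joach_step ha hb hP 1; rw [h1, show (1:ZMod 3) + 1 = 2 by decide] at this; exact this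
    intro j; fin_cases j
    · rfl
    · exact h1
    · exact h2
  have hne : P (i+1) ≠ P i := hP.2.1 i
  have hnn : ‖P (i+1) - P i‖ ≠ 0 := by
    rw [norm_ne_zero_iff, sub_ne_zero]; exact hne
  set l := ‖P (i+1) - P i‖ with hl
  -- inner products with gradients
  have hgq : ⟪P (i+1) - P i, gradE a b (P (i+1))⟫ = 2 * joach a b P 0 * l := by
    have : ⟪uvec (P i) (P (i+1)), gradE a b (P (i+1))⟫ = 2 * joach a b P (i+1) := by
      unfold joach
      have hi : i + 1 - 1 = i := by ring
      rw [hi]; ring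
    have huv : (P (i+1) - P i) = l • uvec (P i) (P (i+1)) := by
      unfold uvec; rw [smul_smul]; field_simp; rw [← hl, div_self hnn, one_smul]
    rw [huv, real_inner_smul_left, this, hc (i+1)]; ring
  have hgp : ⟪P (i+1) - P i, gradE a b (P i)⟫ = -(2 * joach a b P 0 * l) := by
    have h2 : ⟪uvec (P i) (P (i+1)), gradE a b (P i)⟫ = -(2 * joach a b P i) := by
      rw [refl_inner ha hb hP i]; unfold joach; ring
    have huv : (P (i+1) - P i) = l • uvec (P i) (P (i+1)) := by
      unfold uvec; rw [smul_smul]; field_simp; rw [← hl, div_self hnn, one_smul]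
    rw [huv, real_inner_smul_left, h2, hc i]; ring
  -- Qf from gradient difference
  have hkey : 2 * Qf a b (P (i+1) - P i) =
      ⟪P (i+1) - P i, gradE a b (P (i+1))⟫ - ⟪P (i+1) - P i, gradE a b (P i)⟫ := by
    rw [inner_grad, inner_grad]
    have h0 : (P (i+1) - P i) 0 = P (i+1) 0 - P i 0 := rfl
    have h1 : (P (i+1) - P i) 1 = P (i+1) 1 - P i 1 := rfl
    unfold Qf
    rw [h0, h1]; ring
  rw [hgq, hgp] at hkey
  linarith

lemma J_pos (ha : 0 < a) (hb : 0 < b) (hP : IsOrbit a b P) : 0 < joach a b P 0 := by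
  have hne : P (0+1) ≠ P 0 := hP.2.1 0
  have hsub : P (0+1) - P 0 ≠ 0 := sub_ne_zero.mpr hne
  have hq := side_Q ha hb hP 0
  have hqp : 0 < Qf a b (P (0+1) - P 0) := Qf_pos ha hb hsub
  have hnp : 0 < ‖P (0+1) - P 0‖ := norm_pos_iff.mpr hsub
  nlinarith

/-- degenerate (collinear) configurations are impossible -/
lemma collinear_contra {J : ℝ} (ha : 0 < a) (hb : 0 < b) (hJ : 0 < J) {x y : Pt}
    (hx : x ≠ 0) (hy : y ≠ 0) (hr : SameRay ℝ x y)
    (hQx : Qf a b x = 2*J*‖x‖) (hQy : Qf a b y = 2*J*‖y‖)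
    (hQxy : Qf a b (x+y) = 2*J*‖x+y‖) : False := by
  obtain ⟨r, s, hr0, hs0, hrs⟩ := hr.exists_pos hx hy
  have hnx : (0:ℝ) < ‖x‖ := norm_pos_iff.mpr hx
  have hny : (0:ℝ) < ‖y‖ := norm_pos_iff.mpr hy
  have hQ : r^2 * Qf a b x = s^2 * Qf a b y := by
    rw [← Qf_smul, ← Qf_smul, hrs]
  have hN : r * ‖x‖ = s * ‖y‖ := by
    have := congrArg norm hrs
    rw [norm_smul, norm_smul, Real.norm_of_nonneg hr0.le, Real.norm_of_nonneg hs0.le] at this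
    exact this
  have hreqs : r = s := by
    rw [hQx, hQy] at hQ
    -- r^2 * 2J‖x‖ = s^2 * 2J‖y‖ and r‖x‖ = s‖y‖
    have h1 : r^2 * (2*J*‖x‖) = s^2 * (2*J*‖y‖) := hQ
    have h2 : r * (r * ‖x‖) * (2*J) = s * (s * ‖y‖) * (2*J) := by ring_nf; ring_nf at h1; linarith
    rw [hN] at h2
    have : r * (2*J*(s*‖y‖)) = s * (2*J*(s*‖y‖)) := by ring_nf; ring_nf at h2; linarith
    have hpos : 0 < 2*J*(s*‖y‖) := by positivity
    exact mul_right_cancel₀ (ne_of_gt hpos) this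
  have hxy : x = y := by
    rw [hreqs] at hrs
    exact smul_right_injective Pt (ne_of_gt hs0) hrs
  rw [hxy] at hQxy hQx
  have h2y : y + y = (2:ℝ) • y := by module
  rw [h2y, Qf_smul, norm_smul] at hQxy
  simp only [Real.norm_ofNat] at hQxy
  rw [hQx] at hQxy
  nlinarith

lemma sidesQ (ha : 0 < a) (hb : 0 < b) (hP : IsOrbit a b P) :
    Qf a b (P 1 - P 0) = 2 * joach a b P 0 * lC P ∧
    Qf a b (P 2 - P 1) = 2 * joach a b P 0 * lA P ∧
    Qf a b (P 0 - P 2) = 2 * joach a b P 0 * lB P := by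
  have h0 := side_Q ha hb hP 0
  have h1 := side_Q ha hb hP 1
  have h2 := side_Q ha hb hP 2
  have e0 : ((0:ZMod 3)+1) = 1 := by decide
  have e1 : ((1:ZMod 3)+1) = 2 := by decide
  have e2 : ((2:ZMod 3)+1) = 0 := by decide
  rw [e0] at h0; rw [e1] at h1; rw [e2] at h2
  refine ⟨?_, ?_, ?_⟩
  · rw [h0]; unfold lC; rw [norm_sub_rev]
  · rw [h1]; unfold lA; rw [norm_sub_rev]
  · rw [h2]; unfold lB; rw [norm_sub_rev]

lemma dist_pos (hP : IsOrbit a b P) :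
    0 < lA P ∧ 0 < lB P ∧ 0 < lC P := by
  have h0 := hP.2.1 0
  have h1 := hP.2.1 1
  have h2 := hP.2.1 2
  have e0 : ((0:ZMod 3)+1) = 1 := by decide
  have e1 : ((1:ZMod 3)+1) = 2 := by decide
  have e2 : ((2:ZMod 3)+1) = 0 := by decide
  rw [e0] at h0; rw [e1] at h1; rw [e2] at h2
  refine ⟨?_, ?_, ?_⟩
  · unfold lA; rw [norm_pos_iff, sub_ne_zero]; exact (h1 : P 2 ≠ P 1).symm
  · unfold lB; rw [norm_pos_iff, sub_ne_zero]; exact (h2 : P 0 ≠ P 2).symm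
  · unfold lC; rw [norm_pos_iff, sub_ne_zero]; exact (h0 : P 1 ≠ P 0).symm

lemma tri_strict (ha : 0 < a) (hb : 0 < b) (hP : IsOrbit a b P) :
    0 < -lA P + lB P + lC P ∧ 0 < lA P - lB P + lC P ∧ 0 < lA P + lB P - lC P := by
  obtain ⟨hQC, hQA, hQB⟩ := sidesQ ha hb hP
  have hJ := J_pos ha hb hP
  set J := joach a b P 0
  have h0 := hP.2.1 0
  have h1 := hP.2.1 1
  have h2 := hP.2.1 2
  have e0 : ((0:ZMod 3)+1) = 1 := by decide
  have e1 : ((1:ZMod 3)+1) = 2 := by decide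
  have e2 : ((2:ZMod 3)+1) = 0 := by decide
  rw [e0] at h0; rw [e1] at h1; rw [e2] at h2
  have n10 : P 1 - P 0 ≠ 0 := sub_ne_zero.mpr h0
  have n21 : P 2 - P 1 ≠ 0 := sub_ne_zero.mpr h1
  have n02 : P 0 - P 2 ≠ 0 := sub_ne_zero.mpr h2
  have n01 : P 0 - P 1 ≠ 0 := sub_ne_zero.mpr h0.symm
  have n12 : P 1 - P 2 ≠ 0 := sub_ne_zero.mpr h1.symm
  have n20 : P 2 - P 0 ≠ 0 := sub_ne_zero.mpr h2.symm
  -- norms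
  have hla : ‖P 1 - P 2‖ = lA P := rfl
  have hlb : ‖P 2 - P 0‖ = lB P := rfl
  have hlc : ‖P 0 - P 1‖ = lC P := rfl
  have hla' : ‖P 2 - P 1‖ = lA P := by rw [← hla, norm_sub_rev]
  have hlb' : ‖P 0 - P 2‖ = lB P := by rw [← hlb, norm_sub_rev]
  have hlc' : ‖P 1 - P 0‖ = lC P := by rw [← hlc, norm_sub_rev]
  have hQA' : Qf a b (P 1 - P 2) = 2*J*lA P := by
    rw [show P 1 - P 2 = -(P 2 - P 1) by abel, Qf_neg]; exact hQA
  have hQB' : Qf a b (P 2 - P 0) = 2*J*lB P := by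
    rw [show P 2 - P 0 = -(P 0 - P 2) by abel, Qf_neg]; exact hQB
  have hQC' : Qf a b (P 0 - P 1) = 2*J*lC P := by
    rw [show P 0 - P 1 = -(P 1 - P 0) by abel, Qf_neg]; exact hQC
  refine ⟨?_, ?_, ?_⟩
  · -- lA < lB + lC ;  P1 - P2 = (P1 - P0) + (P0 - P2)
    have hsum : P 1 - P 2 = (P 1 - P 0) + (P 0 - P 2) := by abel
    have htri : lA P ≤ lC P + lB P := by
      rw [← hla, hsum, ← hlc', ← hlb']; exact norm_add_le _ _
    rcases lt_or_eq_of_le htri with h | h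
    · linarith
    · exfalso
      have hray : SameRay ℝ (P 1 - P 0) (P 0 - P 2) := by
        rw [sameRay_iff_norm_add, ← hsum, hla, hlc', hlb']
        exact h
      refine collinear_contra ha hb hJ n10 n02 hray ?_ ?_ ?_
      · rw [hQC, hlc']
      · rw [hQB, hlb']
      · rw [← hsum, hQA', hla]
  · -- lB < lC + lA ;  P2 - P0 = (P2 - P1) + (P1 - P0)
    have hsum : P 2 - P 0 = (P 2 - P 1) + (P 1 - P 0) := by abel
    have htri : lB P ≤ lA P + lC P := by
      rw [← hlb, hsum, ← hla', ← hlc']; exact norm_add_le _ _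
    rcases lt_or_eq_of_le htri with h | h
    · linarith
    · exfalso
      have hray : SameRay ℝ (P 2 - P 1) (P 1 - P 0) := by
        rw [sameRay_iff_norm_add, ← hsum, hlb, hla', hlc']
        exact h
      refine collinear_contra ha hb hJ n21 n10 hray ?_ ?_ ?_
      · rw [hQA, hla']
      · rw [hQC, hlc']
      · rw [← hsum, hQB', hlb]
  · -- lC < lA + lB ;  P0 - P1 = (P0 - P2) + (P2 - P1)
    have hsum : P 0 - P 1 = (P 0 - P 2) + (P 2 - P 1) := by abel
    have htri : lC P ≤ lB P + lA P := by
      rw [← hlc, hsum, ← hlb', ← hla']; exact norm_add_le _ _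
    rcases lt_or_eq_of_le htri with h | h
    · linarith
    · exfalso
      have hray : SameRay ℝ (P 0 - P 2) (P 2 - P 1) := by
        rw [sameRay_iff_norm_add, ← hsum, hlc, hlb', hla']
        exact h
      refine collinear_contra ha hb hJ n02 n21 hray ?_ ?_ ?_
      · rw [hQB, hlb']
      · rw [hQA, hla']
      · rw [← hsum, hQC', hlc]

end Orbit

lemma ip_diff (p q r s : Pt) :
    ⟪p - q, r - s⟫ = (‖p - s‖^2 + ‖q - r‖^2 - ‖p - r‖^2 - ‖q - s‖^2)/2 := by
  rw [inner_expand, norm_sq_expand, norm_sq_expand, norm_sq_expand, norm_sq_expand]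
  simp only [PiLp.sub_apply]
  ring

lemma inner_comb (u v u' v' : Pt) (k1 k2 p q r s : ℝ) :
    ⟪k1 • (p • u - q • v), k2 • (r • u' - s • v')⟫ =
      k1*k2*(p*r*⟪u,u'⟫ - p*s*⟪u,v'⟫ - q*r*⟪v,u'⟫ + q*s*⟪v,v'⟫) := by
  simp only [inner_sub_left, inner_sub_right, real_inner_smul_left, real_inner_smul_right]
  ring

lemma uvec_inner (x y z : Pt) :
    ⟪uvec x y, uvec x z⟫ = (‖y - x‖ * ‖z - x‖)⁻¹ * ⟪y - x, z - x⟫ := by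
  unfold uvec
  rw [real_inner_smul_left, real_inner_smul_right, mul_inv]
  ring

set_option maxHeartbeats 1000000 in
lemma excentral_product (P : ZMod 3 → Pt)
    (hdA : 0 < -lA P + lB P + lC P) (hdB : 0 < lA P - lB P + lC P)
    (hdC : 0 < lA P + lB P - lC P)
    (hla : 0 < lA P) (hlb : 0 < lB P) (hlc : 0 < lC P) :
    ⟪uvec (exA P) (exB P), uvec (exA P) (exC P)⟫ *
      ⟪uvec (exB P) (exC P), uvec (exB P) (exA P)⟫ *
      ⟪uvec (exC P) (exA P), uvec (exC P) (exB P)⟫ =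
    ((-lA P + lB P + lC P)*(lA P - lB P + lC P)*(lA P + lB P - lC P))/
      (8 * lA P * lB P * lC P) := by
  set la := lA P with hla_def
  set lb := lB P with hlb_def
  set lc := lC P with hlc_def
  set dA := -la + lb + lc with hdA_def
  set dB := la - lb + lc with hdB_def
  set dC := la + lb - lc with hdC_def
  have hdAne : dA ≠ 0 := ne_of_gt hdA
  have hdBne : dB ≠ 0 := ne_of_gt hdB
  have hdCne : dC ≠ 0 := ne_of_gt hdC
  have hlane : la ≠ 0 := ne_of_gt hla
  have hlbne : lb ≠ 0 := ne_of_gt hlb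
  have hlcne : lc ≠ 0 := ne_of_gt hlc
  -- norms of vertex differences
  have m12 : ‖P 1 - P 2‖ = la := rfl
  have m20 : ‖P 2 - P 0‖ = lb := rfl
  have m01 : ‖P 0 - P 1‖ = lc := rfl
  have m21 : ‖P 2 - P 1‖ = la := by rw [norm_sub_rev]; exact m12
  have m02 : ‖P 0 - P 2‖ = lb := by rw [norm_sub_rev]; exact m20
  have m10 : ‖P 1 - P 0‖ = lc := by rw [norm_sub_rev]; exact m01
  have m00 : ‖P 0 - P 0‖ = (0:ℝ) := by simp
  have m11 : ‖P 1 - P 1‖ = (0:ℝ) := by simp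
  have m22 : ‖P 2 - P 2‖ = (0:ℝ) := by simp
  -- excenter difference vectors
  have hvab : exB P - exA P = (2*lc/(dA*dB)) • (la • (P 0 - P 2) - lb • (P 1 - P 2)) := by
    unfold exA exB
    rw [← hla_def, ← hlb_def, ← hlc_def, ← hdA_def, ← hdB_def]
    match_scalars <;> field_simp <;> ring
  have hvbc : exC P - exB P = (2*la/(dB*dC)) • (lb • (P 1 - P 0) - lc • (P 2 - P 0)) := by
    unfold exB exC
    rw [← hla_def, ← hlb_def, ← hlc_def, ← hdB_def, ← hdC_def]
    match_scalars <;> field_simp <;> ring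
  have hvca : exA P - exC P = (2*lb/(dC*dA)) • (lc • (P 2 - P 1) - la • (P 0 - P 1)) := by
    unfold exC exA
    rw [← hla_def, ← hlb_def, ← hlc_def, ← hdC_def, ← hdA_def]
    match_scalars <;> field_simp <;> ring
  -- inner products
  have Iab : ⟪exB P - exA P, exB P - exA P⟫ = 4*la*lb*lc^2/(dA*dB) := by
    rw [hvab, inner_comb, ip_diff, ip_diff, ip_diff, ip_diff]
    rw [m12, m20, m01, m21, m02, m10, m00, m11, m22]
    field_simp
    ring
  have Ibc : ⟪exC P - exB P, exC P - exB P⟫ = 4*lb*lc*la^2/(dB*dC) := by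
    rw [hvbc, inner_comb, ip_diff, ip_diff, ip_diff, ip_diff]
    rw [m12, m20, m01, m21, m02, m10, m00, m11, m22]
    field_simp
    ring
  have Ica : ⟪exA P - exC P, exA P - exC P⟫ = 4*lc*la*lb^2/(dC*dA) := by
    rw [hvca, inner_comb, ip_diff, ip_diff, ip_diff, ip_diff]
    rw [m12, m20, m01, m21, m02, m10, m00, m11, m22]
    field_simp
    ring
  have NA : ⟪exB P - exA P, exA P - exC P⟫ = -(2*la*lb*lc/dA) := by
    rw [hvab, hvca, inner_comb, ip_diff, ip_diff, ip_diff, ip_diff]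
    rw [m12, m20, m01, m21, m02, m10, m00, m11, m22]
    field_simp
    ring
  have NB : ⟪exC P - exB P, exB P - exA P⟫ = -(2*la*lb*lc/dB) := by
    rw [hvbc, hvab, inner_comb, ip_diff, ip_diff, ip_diff, ip_diff]
    rw [m12, m20, m01, m21, m02, m10, m00, m11, m22]
    field_simp
    ring
  have NC : ⟪exA P - exC P, exC P - exB P⟫ = -(2*la*lb*lc/dC) := by
    rw [hvca, hvbc, inner_comb, ip_diff, ip_diff, ip_diff, ip_diff]
    rw [m12, m20, m01, m21, m02, m10, m00, m11, m22]
    field_simp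
    ring
  -- norms of excenter differences
  set nab := ‖exB P - exA P‖ with hnab_def
  set nbc := ‖exC P - exB P‖ with hnbc_def
  set nca := ‖exA P - exC P‖ with hnca_def
  have hnab : nab * nab = 4*la*lb*lc^2/(dA*dB) := by
    rw [hnab_def, ← real_inner_self_eq_norm_mul_norm]; exact Iab
  have hnbc : nbc * nbc = 4*lb*lc*la^2/(dB*dC) := by
    rw [hnbc_def, ← real_inner_self_eq_norm_mul_norm]; exact Ibc
  have hnca : nca * nca = 4*lc*la*lb^2/(dC*dA) := by
    rw [hnca_def, ← real_inner_self_eq_norm_mul_norm]; exact Ica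
  have hnabne : nab ≠ 0 := by
    intro h; rw [h] at hnab
    have : (0:ℝ) < 4*la*lb*lc^2/(dA*dB) := by positivity
    simp at hnab; linarith [hnab]
  have hnbcne : nbc ≠ 0 := by
    intro h; rw [h] at hnbc
    have : (0:ℝ) < 4*lb*lc*la^2/(dB*dC) := by positivity
    simp at hnbc; linarith [hnbc]
  have hncane : nca ≠ 0 := by
    intro h; rw [h] at hnca
    have : (0:ℝ) < 4*lc*la*lb^2/(dC*dA) := by positivity
    simp at hnca; linarith [hnca]
  -- rewrite the three cosine factors
  have t1 : ⟪uvec (exA P) (exB P), uvec (exA P) (exC P)⟫ =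
      (nab * nca)⁻¹ * (2*la*lb*lc/dA) := by
    rw [uvec_inner]
    have e1 : exC P - exA P = -(exA P - exC P) := by abel
    rw [e1, inner_neg_right, NA, norm_neg]
    ring
  have t2 : ⟪uvec (exB P) (exC P), uvec (exB P) (exA P)⟫ =
      (nbc * nab)⁻¹ * (2*la*lb*lc/dB) := by
    rw [uvec_inner]
    have e1 : exA P - exB P = -(exB P - exA P) := by abel
    rw [e1, inner_neg_right, NB, norm_neg]
    ring
  have t3 : ⟪uvec (exC P) (exA P), uvec (exC P) (exB P)⟫ =
      (nca * nbc)⁻¹ * (2*la*lb*lc/dC) := by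
    rw [uvec_inner]
    have e1 : exB P - exC P = -(exC P - exB P) := by abel
    rw [e1, inner_neg_right, NC, norm_neg]
    ring
  rw [t1, t2, t3]
  have key : ((nab * nca)⁻¹ * (2*la*lb*lc/dA)) * ((nbc * nab)⁻¹ * (2*la*lb*lc/dB)) *
      ((nca * nbc)⁻¹ * (2*la*lb*lc/dC)) =
      (2*la*lb*lc/dA) * (2*la*lb*lc/dB) * (2*la*lb*lc/dC) /
        ((nab*nab) * (nbc*nbc) * (nca*nca)) := by
    field_simp
  rw [key, hnab, hnbc, hnca]
  field_simp
  ring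

section ComplexElim

open Complex

/-- Core algebraic elimination: if the three pair-equations of a billiard triangle hold,
then the symmetric quantity satisfies the invariant quadratic relation. -/
lemma quartic_elim (al be mu z0 z1 z2 : ℂ)
    (h12 : (z2 - z1)^2 = mu * ((al-be)*(z1*z2)^2 - 2*(al+be)*(z1*z2) + (al-be)))
    (h20 : (z0 - z2)^2 = mu * ((al-be)*(z2*z0)^2 - 2*(al+be)*(z2*z0) + (al-be)))
    (h01 : (z1 - z0)^2 = mu * ((al-be)*(z0*z1)^2 - 2*(al+be)*(z0*z1) + (al-be)))
    (hne01 : z0 ≠ z1) (hne12 : z1 ≠ z2) (hne02 : z0 ≠ z2)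
    (h0 : z0 ≠ 0) (h1 : z1 ≠ 0) (h2 : z2 ≠ 0) :
    (al-be)^2 * ((z0+z1)*(z1+z2)*(z2+z0))^2
      - 8*(al^2+be^2) * ((z0+z1)*(z1+z2)*(z2+z0)) * (z0*z1*z2)
      - 16*al*be * (z0*z1*z2)^2 = 0 := by
  set e1 := z0 + z1 + z2 with he1_def
  set e2 := z0*z1 + z1*z2 + z2*z0 with he2_def
  set e3 := z0*z1*z2 with he3_def
  set c2 := al - be with hc2_def
  set t2 := al + be with ht2_def
  set p := -mu*c2 - e2 with hp_def
  set q := 2*mu*t2*e3 - 3*e3 + e1*e2 with hq_def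
  set r := -mu*c2*e3^2 - e1*e3 with hr_def
  -- each zk is a root of the common quadratic p X^2 + q X + r (after removing the
  -- quartic factor (X - z0)(X - z1)(X - z2)(X - e1))
  have claim0 : p*z0^2 + q*z0 + r = 0 := by
    rw [hp_def, hq_def, hr_def, he1_def, he2_def, he3_def, hc2_def, ht2_def]
    linear_combination (z0^2) * h12
  have claim1 : p*z1^2 + q*z1 + r = 0 := by
    rw [hp_def, hq_def, hr_def, he1_def, he2_def, he3_def, hc2_def, ht2_def]
    linear_combination (z1^2) * h20
  have claim2 : p*z2^2 + q*z2 + r = 0 := by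
    rw [hp_def, hq_def, hr_def, he1_def, he2_def, he3_def, hc2_def, ht2_def]
    linear_combination (z2^2) * h01
  have d01 : z0 - z1 ≠ 0 := sub_ne_zero.mpr hne01
  have d12 : z1 - z2 ≠ 0 := sub_ne_zero.mpr hne12
  have d02 : z0 - z2 ≠ 0 := sub_ne_zero.mpr hne02
  have hpq01 : p*(z0+z1) + q = 0 := by
    have h' : (z0 - z1) * (p*(z0+z1) + q) = 0 := by linear_combination claim0 - claim1
    exact (mul_eq_zero.mp h').resolve_left d01
  have hpq12 : p*(z1+z2) + q = 0 := by
    have h' : (z1 - z2) * (p*(z1+z2) + q) = 0 := by linear_combination claim1 - claim2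
    exact (mul_eq_zero.mp h').resolve_left d12
  have hp0 : p = 0 := by
    have h' : (z0 - z2) * p = 0 := by linear_combination hpq01 - hpq12
    exact (mul_eq_zero.mp h').resolve_left d02
  have hq0 : q = 0 := by linear_combination hpq01 - (z0+z1)*hp0
  have hr0 : r = 0 := by linear_combination claim0 - z0^2*hp0 - z0*hq0
  have he3ne : e3 ≠ 0 := by
    rw [he3_def]; exact mul_ne_zero (mul_ne_zero h0 h1) h2
  -- Vieta consequences
  have he2v : e2 = -mu*c2 := by linear_combination -hp0
  have he1v : e1 = -mu*c2*e3 := by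
    have h' : e3 * (e1 + mu*c2*e3) = 0 := by linear_combination -hr0
    have := (mul_eq_zero.mp h').resolve_left he3ne
    linear_combination this
  have hmu : mu^2*c2^2 = 3 - 2*mu*t2 := by
    have h' : e3 * (mu^2*c2^2 + 2*mu*t2 - 3) = 0 := by
      linear_combination hq0 - e2*he1v - (-mu*c2*e3)*he2v
    have := (mul_eq_zero.mp h').resolve_left he3ne
    linear_combination this
  -- the symmetric quantity
  have hS : (z0+z1)*(z1+z2)*(z2+z0) = (2 - 2*mu*t2)*e3 := by
    have hSe : (z0+z1)*(z1+z2)*(z2+z0) = e1*e2 - e3 := by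
      rw [he1_def, he2_def, he3_def]; ring
    rw [hSe, he1v, he2v]
    linear_combination e3 * hmu
  rw [hS]
  rw [hc2_def, ht2_def] at hmu ⊢
  linear_combination (4*(al+be)^2*e3^2) * hmu

/-- complexification of one side of the orbit -/
lemma pair_equation {a b J : ℝ} (ha : 0 < a) (hb : 0 < b) {p q : Pt}
    (hp : fE a b p = 1) (hq : fE a b q = 1) (hpq : q ≠ p)
    (hQ : Qf a b (q - p) = 2*J*‖q - p‖) :
    ((⟨q 0/a, q 1/b⟩ : ℂ) - (⟨p 0/a, p 1/b⟩ : ℂ))^2 =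
      ((J:ℝ):ℂ)^2 * (((a:ℂ)^2-(b:ℂ)^2)*((⟨p 0/a, p 1/b⟩ : ℂ)*(⟨q 0/a, q 1/b⟩ : ℂ))^2
        - 2*((a:ℂ)^2+(b:ℂ)^2)*((⟨p 0/a, p 1/b⟩ : ℂ)*(⟨q 0/a, q 1/b⟩ : ℂ))
        + ((a:ℂ)^2-(b:ℂ)^2)) := by
  have hane : (a:ℝ) ≠ 0 := ne_of_gt ha
  have hbne : (b:ℝ) ≠ 0 := ne_of_gt hb
  set zp : ℂ := ⟨p 0/a, p 1/b⟩ with hzp_def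
  set zq : ℂ := ⟨q 0/a, q 1/b⟩ with hzq_def
  have hzp_re : zp.re = p 0/a := rfl
  have hzp_im : zp.im = p 1/b := rfl
  have hzq_re : zq.re = q 0/a := rfl
  have hzq_im : zq.im = q 1/b := rfl
  -- unit circle
  have hnp : Complex.normSq zp = 1 := by
    rw [Complex.normSq_apply, hzp_re, hzp_im]
    unfold fE at hp
    field_simp
    field_simp at hp
    linarith
  have hnq : Complex.normSq zq = 1 := by
    rw [Complex.normSq_apply, hzq_re, hzq_im]
    unfold fE at hq
    field_simp
    field_simp at hq
    linarith
  have hzpne : zp ≠ 0 := by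
    intro h; rw [h] at hnp; simp at hnp
  have hzqne : zq ≠ 0 := by
    intro h; rw [h] at hnq; simp at hnq
  have hcp : (starRingEnd ℂ) zp = zp⁻¹ := by rw [Complex.inv_def, hnp]; simp
  have hcq : (starRingEnd ℂ) zq = zq⁻¹ := by rw [Complex.inv_def, hnq]; simp
  set w : ℂ := zq - zp with hw_def
  set s : ℂ := zp * zq with hs_def
  have hsne : s ≠ 0 := mul_ne_zero hzpne hzqne
  have hwne : w ≠ 0 := by
    rw [hw_def, sub_ne_zero]
    intro h
    apply hpq
    have hre : q 0/a = p 0/a := by rw [← hzq_re, ← hzp_re, h]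
    have him : q 1/b = p 1/b := by rw [← hzq_im, ← hzp_im, h]
    have h0 : q 0 = p 0 := by field_simp at hre; exact hre
    have h1 : q 1 = p 1 := by field_simp at him; exact him
    ext i; fin_cases i <;> simpa [h0, h1]
  have hcw : (starRingEnd ℂ) w = -w/s := by
    rw [eq_div_iff hsne, hw_def, map_sub, hcp, hcq, hs_def]
    have e1 : zq * zq⁻¹ = 1 := mul_inv_cancel₀ hzqne
    have e2 : zp * zp⁻¹ = 1 := mul_inv_cancel₀ hzpne
    linear_combination zp*e1 - zq*e2
  -- (A) : the quadratic form
  have hA : ((Qf a b (q - p) : ℝ) : ℂ) = -w^2/s := by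
    have h1 : (Qf a b (q - p) : ℝ) = Complex.normSq w := by
      rw [Complex.normSq_apply, hw_def]
      have hre : (zq - zp).re = q 0/a - p 0/a := rfl
      have him : (zq - zp).im = q 1/b - p 1/b := rfl
      rw [hre, him]
      unfold Qf
      have e0 : (q - p) 0 = q 0 - p 0 := rfl
      have e1 : (q - p) 1 = q 1 - p 1 := rfl
      rw [e0, e1]
      field_simp
    rw [h1, ← Complex.mul_conj w, hcw]
    ring
  -- (B) : the squared length
  have hB : ((‖q - p‖^2 : ℝ) : ℂ) =
      w^2 * (((a:ℂ)^2-(b:ℂ)^2)*s^2 - 2*((a:ℂ)^2+(b:ℂ)^2)*s + ((a:ℂ)^2-(b:ℂ)^2)) / (4*s^2) := by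
    have h1 : (‖q - p‖^2 : ℝ) = (a * w.re)^2 + (b * w.im)^2 := by
      rw [norm_sq_expand]
      have e0 : (q - p) 0 = q 0 - p 0 := rfl
      have e1 : (q - p) 1 = q 1 - p 1 := rfl
      have hre : w.re = q 0/a - p 0/a := rfl
      have him : w.im = q 1/b - p 1/b := rfl
      rw [e0, e1, hre, him]
      field_simp
    rw [h1]
    push_cast
    have hre2 : ((w.re : ℝ) : ℂ)^2 = (w + (starRingEnd ℂ) w)^2/4 := by
      have : ((2 * w.re : ℝ) : ℂ) = w + (starRingEnd ℂ) w := (Complex.add_conj w).symm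
      push_cast at this
      linear_combination (((w.re:ℝ):ℂ)/2 + (w + (starRingEnd ℂ) w)/4) * this
    have him2 : ((w.im : ℝ) : ℂ)^2 = -((w - (starRingEnd ℂ) w)^2/4) := by
      have h' : ((2 * w.im : ℝ) : ℂ) * Complex.I = w - (starRingEnd ℂ) w := (Complex.sub_conj w).symm
      push_cast at h'
      have hI : Complex.I^2 = -1 := Complex.I_sq
      have h'' : (2*((w.im:ℝ):ℂ)*Complex.I)^2 = (w - (starRingEnd ℂ) w)^2 := by rw [h']
      linear_combination (-(1:ℂ)/4) * h'' + (((w.im:ℝ):ℂ))^2 * hI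
    rw [mul_pow, mul_pow, hre2, him2, hcw]
    field_simp
    ring
  -- combine
  have hsq : (Qf a b (q - p))^2 = 4*J^2*(‖q - p‖^2) := by
    rw [hQ]; ring
  have hsqC : ((Qf a b (q - p) : ℝ) : ℂ)^2 = 4*((J:ℝ):ℂ)^2*((‖q - p‖^2 : ℝ) : ℂ) := by
    push_cast
    exact_mod_cast congrArg (fun x : ℝ => (x : ℂ)) hsq
  rw [hA, hB] at hsqC
  have hkey : w^2 * (w^2 - ((J:ℝ):ℂ)^2 * (((a:ℂ)^2-(b:ℂ)^2)*s^2 - 2*((a:ℂ)^2+(b:ℂ)^2)*s + ((a:ℂ)^2-(b:ℂ)^2))) = 0 := by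
    have hs2 : (s:ℂ)^2 ≠ 0 := pow_ne_zero 2 hsne
    have h5 := hsqC
    field_simp at h5
    have h6 : w^2 * (w^2 - ((J:ℝ):ℂ)^2 * (((a:ℂ)^2-(b:ℂ)^2)*s^2 - 2*((a:ℂ)^2+(b:ℂ)^2)*s + ((a:ℂ)^2-(b:ℂ)^2))) * (4*s^2) = 0 * (4*s^2) := by
      linear_combination (w^2*4*s^2) * h5
    exact mul_right_cancel₀ (mul_ne_zero (by norm_num : (4:ℂ) ≠ 0) hs2) h6
  rcases mul_eq_zero.mp hkey with h | h
  · exact absurd h (pow_ne_zero 2 hwne)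
  · rw [hw_def, hs_def] at h
    linear_combination h

/-- normSq of the complexified vertex -/
lemma z_normSq {a b : ℝ} (ha : 0 < a) (hb : 0 < b) {p : Pt} (hp : fE a b p = 1) :
    Complex.normSq (⟨p 0/a, p 1/b⟩ : ℂ) = 1 := by
  have hane : (a:ℝ) ≠ 0 := ne_of_gt ha
  have hbne : (b:ℝ) ≠ 0 := ne_of_gt hb
  rw [Complex.normSq_apply]
  unfold fE at hp
  field_simp
  field_simp at hp
  linarith

lemma z_inj {a b : ℝ} (ha : 0 < a) (hb : 0 < b) {p q : Pt}
    (h : (⟨p 0/a, p 1/b⟩ : ℂ) = (⟨q 0/a, q 1/b⟩ : ℂ)) : p = q := by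
  have hane : (a:ℝ) ≠ 0 := ne_of_gt ha
  have hbne : (b:ℝ) ≠ 0 := ne_of_gt hb
  have hre := congrArg Complex.re h
  have him := congrArg Complex.im h
  simp only [] at hre him
  have h0 : p 0 = q 0 := by
    have : p 0/a = q 0/a := hre
    field_simp at this; exact this
  have h1 : p 1 = q 1 := by
    have : p 1/b = q 1/b := him
    field_simp at this; exact this
  ext i; fin_cases i <;> simpa [h0, h1]

/-- complexification of the quadratic form of a chord -/
lemma Qf_complex {a b : ℝ} (ha : 0 < a) (hb : 0 < b) {p q : Pt}
    (hp : fE a b p = 1) (hq : fE a b q = 1) :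
    ((Qf a b (q - p) : ℝ) : ℂ) * ((⟨p 0/a, p 1/b⟩ : ℂ) * (⟨q 0/a, q 1/b⟩ : ℂ)) =
      -((⟨q 0/a, q 1/b⟩ : ℂ) - (⟨p 0/a, p 1/b⟩ : ℂ))^2 := by
  set zp : ℂ := ⟨p 0/a, p 1/b⟩ with hzp_def
  set zq : ℂ := ⟨q 0/a, q 1/b⟩ with hzq_def
  have hnp : Complex.normSq zp = 1 := z_normSq ha hb hp
  have hnq : Complex.normSq zq = 1 := z_normSq ha hb hq
  have hzpne : zp ≠ 0 := by intro h; rw [h] at hnp; simp at hnp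
  have hzqne : zq ≠ 0 := by intro h; rw [h] at hnq; simp at hnq
  have hcp : (starRingEnd ℂ) zp = zp⁻¹ := by rw [Complex.inv_def, hnp]; simp
  have hcq : (starRingEnd ℂ) zq = zq⁻¹ := by rw [Complex.inv_def, hnq]; simp
  have hsne : zp * zq ≠ 0 := mul_ne_zero hzpne hzqne
  have hcw : (starRingEnd ℂ) (zq - zp) = -(zq - zp)/(zp*zq) := by
    rw [eq_div_iff hsne, map_sub, hcp, hcq]
    have e1 : zq * zq⁻¹ = 1 := mul_inv_cancel₀ hzqne
    have e2 : zp * zp⁻¹ = 1 := mul_inv_cancel₀ hzpne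
    linear_combination zp*e1 - zq*e2
  have h1 : (Qf a b (q - p) : ℝ) = Complex.normSq (zq - zp) := by
    rw [Complex.normSq_apply]
    have hre : (zq - zp).re = q 0/a - p 0/a := rfl
    have him : (zq - zp).im = q 1/b - p 1/b := rfl
    rw [hre, him]
    unfold Qf
    have e0 : (q - p) 0 = q 0 - p 0 := rfl
    have e1 : (q - p) 1 = q 1 - p 1 := rfl
    rw [e0, e1]
    have hane : (a:ℝ) ≠ 0 := ne_of_gt ha
    have hbne : (b:ℝ) ≠ 0 := ne_of_gt hb
    field_simp
  rw [h1, ← Complex.mul_conj (zq - zp), hcw]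
  field_simp

section Main

variable {a b : ℝ} {P : ZMod 3 → Pt}

set_option maxHeartbeats 2000000 in
lemma orbit_key (ha : 0 < a) (hb : 0 < b) (hP : IsOrbit a b P) :
    ∃ T : ℝ,
      (⟪uvec (exA P) (exB P), uvec (exA P) (exC P)⟫ *
        ⟪uvec (exB P) (exC P), uvec (exB P) (exA P)⟫ *
        ⟪uvec (exC P) (exA P), uvec (exC P) (exB P)⟫ = T) ∧ 0 < T ∧
      4*(a^2-b^2)^2*T^2 + 4*(a^4+b^4)*T - a^2*b^2 = 0 := by
  obtain ⟨hdA, hdB, hdC⟩ := tri_strict ha hb hP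
  obtain ⟨hla, hlb, hlc⟩ := dist_pos hP
  refine ⟨((-lA P + lB P + lC P)*(lA P - lB P + lC P)*(lA P + lB P - lC P))/
      (8 * lA P * lB P * lC P), excentral_product P hdA hdB hdC hla hlb hlc, by positivity, ?_⟩
  -- billiard relations
  obtain ⟨hQC, hQA, hQB⟩ := sidesQ ha hb hP
  have hJ : 0 < joach a b P 0 := J_pos ha hb hP
  set J := joach a b P 0 with hJ_def
  set la := lA P with hla_def
  set lb := lB P with hlb_def
  set lc := lC P with hlc_def
  set QA := Qf a b (P 2 - P 1) with hQA_def
  set QB := Qf a b (P 0 - P 2) with hQB_def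
  set QC := Qf a b (P 1 - P 0) with hQC_def
  have e0 : ((0:ZMod 3)+1) = 1 := by decide
  have e1 : ((1:ZMod 3)+1) = 2 := by decide
  have e2 : ((2:ZMod 3)+1) = 0 := by decide
  have hne10 : P 1 ≠ P 0 := by have := hP.2.1 0; rwa [e0] at this
  have hne21 : P 2 ≠ P 1 := by have := hP.2.1 1; rwa [e1] at this
  have hne02 : P 0 ≠ P 2 := by have := hP.2.1 2; rwa [e2] at this
  -- complexified vertices
  set z0 : ℂ := ⟨P 0 0/a, P 0 1/b⟩ with hz0_def
  set z1 : ℂ := ⟨P 1 0/a, P 1 1/b⟩ with hz1_def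
  set z2 : ℂ := ⟨P 2 0/a, P 2 1/b⟩ with hz2_def
  have hn0 : Complex.normSq z0 = 1 := z_normSq ha hb (hP.1 0)
  have hn1 : Complex.normSq z1 = 1 := z_normSq ha hb (hP.1 1)
  have hn2 : Complex.normSq z2 = 1 := z_normSq ha hb (hP.1 2)
  have hz0ne : z0 ≠ 0 := by intro h; rw [h] at hn0; simp at hn0
  have hz1ne : z1 ≠ 0 := by intro h; rw [h] at hn1; simp at hn1
  have hz2ne : z2 ≠ 0 := by intro h; rw [h] at hn2; simp at hn2
  have hzne01 : z0 ≠ z1 := fun h => hne10 (z_inj ha hb h).symm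
  have hzne12 : z1 ≠ z2 := fun h => hne21 (z_inj ha hb h).symm
  have hzne02 : z0 ≠ z2 := fun h => hne02 (z_inj ha hb h)
  -- pair equations
  have h12 : (z2 - z1)^2 = ((J:ℝ):ℂ)^2 * (((a:ℂ)^2-(b:ℂ)^2)*(z1*z2)^2
      - 2*((a:ℂ)^2+(b:ℂ)^2)*(z1*z2) + ((a:ℂ)^2-(b:ℂ)^2)) := by
    apply pair_equation ha hb (hP.1 1) (hP.1 2) hne21
    rw [show ‖P 2 - P 1‖ = la by rw [hla_def]; unfold lA; rw [norm_sub_rev]]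
    exact hQA
  have h20 : (z0 - z2)^2 = ((J:ℝ):ℂ)^2 * (((a:ℂ)^2-(b:ℂ)^2)*(z2*z0)^2
      - 2*((a:ℂ)^2+(b:ℂ)^2)*(z2*z0) + ((a:ℂ)^2-(b:ℂ)^2)) := by
    apply pair_equation ha hb (hP.1 2) (hP.1 0) hne02
    rw [show ‖P 0 - P 2‖ = lb by rw [hlb_def]; unfold lB; rw [norm_sub_rev]]
    exact hQB
  have h01 : (z1 - z0)^2 = ((J:ℝ):ℂ)^2 * (((a:ℂ)^2-(b:ℂ)^2)*(z0*z1)^2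
      - 2*((a:ℂ)^2+(b:ℂ)^2)*(z0*z1) + ((a:ℂ)^2-(b:ℂ)^2)) := by
    apply pair_equation ha hb (hP.1 0) (hP.1 1) hne10
    rw [show ‖P 1 - P 0‖ = lc by rw [hlc_def]; unfold lC; rw [norm_sub_rev]]
    exact hQC
  have helim := quartic_elim ((a:ℂ)^2) ((b:ℂ)^2) (((J:ℝ):ℂ)^2) z0 z1 z2
    h12 h20 h01 hzne01 hzne12 hzne02 hz0ne hz1ne hz2ne
  -- cast the Q's
  have hQAc : ((QA : ℝ) : ℂ) * (z1*z2) = -(z2 - z1)^2 := Qf_complex ha hb (hP.1 1) (hP.1 2)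
  have hQBc : ((QB : ℝ) : ℂ) * (z2*z0) = -(z0 - z2)^2 := Qf_complex ha hb (hP.1 2) (hP.1 0)
  have hQCc : ((QC : ℝ) : ℂ) * (z0*z1) = -(z1 - z0)^2 := Qf_complex ha hb (hP.1 0) (hP.1 1)
  -- the real master identity
  set UR : ℝ := (-QA+QB+QC)*(QA-QB+QC)*(QA+QB-QC) with hUR_def
  set VR : ℝ := QA*QB*QC with hVR_def
  set e3 : ℂ := z0*z1*z2 with he3_def
  have he3ne : e3 ≠ 0 := mul_ne_zero (mul_ne_zero hz0ne hz1ne) hz2ne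
  have hFA : (-((QA:ℝ):ℂ)+((QB:ℝ):ℂ)+((QC:ℝ):ℂ)) * e3 = (z1+z2)*(z2-z0)*(z0-z1) := by
    rw [he3_def]
    linear_combination (-z0)*hQAc + z1*hQBc + z2*hQCc
  have hFB : (((QA:ℝ):ℂ)-((QB:ℝ):ℂ)+((QC:ℝ):ℂ)) * e3 = (z2+z0)*(z0-z1)*(z1-z2) := by
    rw [he3_def]
    linear_combination z0*hQAc + (-z1)*hQBc + z2*hQCc
  have hFC : (((QA:ℝ):ℂ)+((QB:ℝ):ℂ)-((QC:ℝ):ℂ)) * e3 = (z0+z1)*(z1-z2)*(z2-z0) := by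
    rw [he3_def]
    linear_combination z0*hQAc + z1*hQBc + (-z2)*hQCc
  have hU : ((UR : ℝ) : ℂ) * e3^3 =
      ((z1+z2)*(z2-z0)*(z0-z1)) * ((z2+z0)*(z0-z1)*(z1-z2)) * ((z0+z1)*(z1-z2)*(z2-z0)) := by
    rw [hUR_def]
    push_cast
    linear_combination
      ((((QA:ℝ):ℂ)-((QB:ℝ):ℂ)+((QC:ℝ):ℂ))*e3*((((QA:ℝ):ℂ)+((QB:ℝ):ℂ)-((QC:ℝ):ℂ)))*e3) * hFA
      + ((z1+z2)*(z2-z0)*(z0-z1)*((((QA:ℝ):ℂ)+((QB:ℝ):ℂ)-((QC:ℝ):ℂ)))*e3) * hFB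
      + ((z1+z2)*(z2-z0)*(z0-z1)*((z2+z0)*(z0-z1)*(z1-z2))) * hFC
  have hV : ((VR : ℝ) : ℂ) * e3^2 = -((z1-z2)*(z2-z0)*(z0-z1))^2 := by
    rw [hVR_def]
    push_cast
    rw [show e3 = z0*z1*z2 from he3_def]
    linear_combination
      (((QB:ℝ):ℂ)*z2*z0*(((QC:ℝ):ℂ)*(z0*z1))) * hQAc
      + ((-(z2-z1)^2)*(((QC:ℝ):ℂ)*(z0*z1))) * hQBc
      + ((-(z2-z1)^2)*(-(z0-z2)^2)) * hQCc
  have hfin : (a^2-b^2)^2*UR^2 + 8*(a^4+b^4)*UR*VR - 16*a^2*b^2*VR^2 = 0 := by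
    set c2 : ℂ := (a:ℂ)^2 - (b:ℂ)^2 with hc2_def
    set t4 : ℂ := (a:ℂ)^4 + (b:ℂ)^4 with ht4_def
    set SD : ℂ := ((z1+z2)*(z2-z0)*(z0-z1)) * ((z2+z0)*(z0-z1)*(z1-z2)) * ((z0+z1)*(z1-z2)*(z2-z0)) with hSD_def
    set MD : ℂ := -((z1-z2)*(z2-z0)*(z0-z1))^2 with hMD_def
    have hC0 : (c2^2*((UR:ℝ):ℂ)^2 + 8*t4*((UR:ℝ):ℂ)*((VR:ℝ):ℂ)
        - 16*(a:ℂ)^2*(b:ℂ)^2*((VR:ℝ):ℂ)^2) * e3^6 = 0 := by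
      have coef1 : ℂ := 0
      rw [hc2_def, ht4_def]
      linear_combination
        ((((a:ℂ)^2-(b:ℂ)^2)^2*(((UR:ℝ):ℂ)*e3^3 + SD) + 8*((a:ℂ)^4+(b:ℂ)^4)*e3*(((VR:ℝ):ℂ)*e3^2)) * hU)
        + ((8*((a:ℂ)^4+(b:ℂ)^4)*e3*SD - 16*(a:ℂ)^2*(b:ℂ)^2*e3^2*(((VR:ℝ):ℂ)*e3^2 + MD)) * hV)
        + (((z1-z2)*(z2-z0)*(z0-z1))^4 * helim)
    have hC : ((( (a^2-b^2)^2*UR^2 + 8*(a^4+b^4)*UR*VR - 16*a^2*b^2*VR^2 : ℝ)) : ℂ) = 0 := by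
      have hexp : (((a^2-b^2)^2*UR^2 + 8*(a^4+b^4)*UR*VR - 16*a^2*b^2*VR^2 : ℝ) : ℂ) =
          c2^2*((UR:ℝ):ℂ)^2 + 8*t4*((UR:ℝ):ℂ)*((VR:ℝ):ℂ)
            - 16*(a:ℂ)^2*(b:ℂ)^2*((VR:ℝ):ℂ)^2 := by
        rw [hc2_def, ht4_def]; push_cast; ring
      rw [hexp]
      have h6 : e3^6 ≠ 0 := pow_ne_zero 6 he3ne
      exact (mul_eq_zero.mp hC0).resolve_right h6
    exact_mod_cast hC
  -- substitute the billiard side lengths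
  have hURl : UR = 8*J^3*((-la+lb+lc)*(la-lb+lc)*(la+lb-lc)) := by
    rw [hUR_def, hQA, hQB, hQC]; ring
  have hVRl : VR = 8*J^3*(la*lb*lc) := by
    rw [hVR_def, hQA, hQB, hQC]; ring
  rw [hURl, hVRl] at hfin
  have hJne : (64*J^6 : ℝ) ≠ 0 := by positivity
  have hfin2 : (a^2-b^2)^2*((-la+lb+lc)*(la-lb+lc)*(la+lb-lc))^2
      + 8*(a^4+b^4)*((-la+lb+lc)*(la-lb+lc)*(la+lb-lc))*(la*lb*lc)
      - 16*a^2*b^2*(la*lb*lc)^2 = 0 := by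
    apply mul_left_cancel₀ hJne
    rw [mul_zero]
    linear_combination hfin
  have h8 : (8*la*lb*lc : ℝ) ≠ 0 := by positivity
  field_simp
  linear_combination 4 * hfin2

end Main

end ComplexElim

end Inv

/-- any two 3-periodic orbits of the same ellipse have equal product of
cosines of the angles of their excentral triangles. -/
theorem product_of_excentral_cosines_invariant (a b : ℝ) (hb : 0 < b) (hab : b ≤ a)
    (P P' : ZMod 3 → Pt) (hP : IsOrbit a b P) (hP' : IsOrbit a b P') :
    ⟪uvec (exA P) (exB P), uvec (exA P) (exC P)⟫ *
      ⟪uvec (exB P) (exC P), uvec (exB P) (exA P)⟫ *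
      ⟪uvec (exC P) (exA P), uvec (exC P) (exB P)⟫ =
    ⟪uvec (exA P') (exB P'), uvec (exA P') (exC P')⟫ *
      ⟪uvec (exB P') (exC P'), uvec (exB P') (exA P')⟫ *
      ⟪uvec (exC P') (exA P'), uvec (exC P') (exB P')⟫ := by
  have ha : 0 < a := lt_of_lt_of_le hb hab
  obtain ⟨T, hT, hTpos, hTq⟩ := Inv.orbit_key ha hb hP
  obtain ⟨T', hT', hTpos', hTq'⟩ := Inv.orbit_key ha hb hP'
  rw [hT, hT']
  have hfac : (T - T') * (4*(a^2-b^2)^2*(T+T') + 4*(a^4+b^4)) = 0 := by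
    linear_combination hTq - hTq'
  have h1 : (0:ℝ) ≤ 4*(a^2-b^2)^2*(T+T') := by positivity
  have h2 : (0:ℝ) < 4*(a^4+b^4) := by positivity
  have hpos : (0:ℝ) < 4*(a^2-b^2)^2*(T+T') + 4*(a^4+b^4) := by linarith
  have h3 := (mul_eq_zero.mp hfac).resolve_right (ne_of_gt hpos)
  have h4 : T = T' := by linarith [sub_eq_zero.mp h3]
  exact h4
end
end

section
/- For every convex N-periodic billiard orbit P of the ellipse E (N ≥ 3), with Joachimsthal constant γ and perimeter L = ∑_i ‖P(i+1) − P(i)‖, the sum of the cosines of the interior angles satisfies ∑_{i ∈ ZMod N} cos θ_i = γ·L − N, where cos θ_i = ((P(i−1) − P(i))/‖P(i−1) − P(i)‖)·((P(i+1) − P(i))/‖P(i+1) − P(i)‖). -/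
open scoped RealInnerProductSpace

noncomputable section

/-- for a convex N-periodic orbit, ∑ cos θᵢ = γ·L − N. -/
theorem sum_of_cosines_eq_gammaL_sub_N (a b : ℝ) (hb : 0 < b) (hab : b ≤ a)
    (N : ℕ) [NeZero N] (hN : 3 ≤ N) (P : ZMod N → Pt) (hP : IsConvexOrbit a b P)
    (γ : ℝ) (hγ : ∀ i : ZMod N, joach a b P i = γ) :
    (∑ i : ZMod N, ⟪uvec (P i) (P (i - 1)), uvec (P i) (P (i + 1))⟫) =
      γ * (∑ i : ZMod N, ‖P (i + 1) - P i‖) - N := by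
  obtain ⟨⟨hon, hne, hrefl⟩, -⟩ := hP
  set u : ZMod N → Pt := fun i => uvec (P i) (P (i + 1)) with hu
  set g : ZMod N → Pt := fun i => gradE a b (P i) with hg
  have hv : ∀ i : ZMod N, P (i + 1) - P i ≠ 0 := fun i => sub_ne_zero.mpr (hne i)
  have hnv : ∀ i : ZMod N, ‖P (i + 1) - P i‖ ≠ 0 := fun i => norm_ne_zero_iff.mpr (hv i)
  have hnormu : ∀ i, ⟪u i, u i⟫ = 1 := by
    intro i
    simp only [hu, uvec]
    rw [real_inner_smul_left, real_inner_smul_right, real_inner_self_eq_norm_sq]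
    have h := hnv i
    field_simp
  have hlen : ∀ i, ⟪u i, P (i + 1) - P i⟫ = ‖P (i + 1) - P i‖ := by
    intro i
    simp only [hu, uvec]
    rw [real_inner_smul_left, real_inner_self_eq_norm_sq]
    have h := hnv i
    field_simp
  have hgp : ∀ i, ⟪g i, P i⟫ = 2 := by
    intro i
    have h1 := hon i
    simp only [fE] at h1
    simp only [hg, gradE, PiLp.inner_apply, RCLike.inner_apply, conj_trivial,
      Fin.sum_univ_two, WithLp.equiv_symm_apply, WithLp.ofLp_toLp, Matrix.cons_val_zero,
      Matrix.cons_val_one, Matrix.head_cons]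
    linear_combination 2 * h1
  have hprev : ∀ i : ZMod N, i - 1 + 1 = i := fun i => by ring
  have huprev : ∀ i : ZMod N, uvec (P (i - 1)) (P i) = u (i - 1) := by
    intro i; simp only [hu, hprev]
  have hγ' : ∀ i, ⟪u (i - 1), g i⟫ = 2 * γ := by
    intro i
    have h := hγ i
    rw [joach, huprev i] at h
    linarith
  have key : ∀ i : ZMod N,
      ⟪uvec (P i) (P (i - 1)), uvec (P i) (P (i + 1))⟫ =
        γ * (⟪u (i - 1), P i⟫ - ⟪u i, P i⟫) - 1 := by
    intro i
    have hrefl' : u (i - 1) - u i =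
        ((2 * ⟪u (i - 1), ‖g i‖⁻¹ • g i⟫) * ‖g i‖⁻¹) • g i := by
      have h : u i = u (i - 1) -
          (2 * ⟪u (i - 1), ‖g i‖⁻¹ • g i⟫) • (‖g i‖⁻¹ • g i) := by
        have h := hrefl i
        rw [huprev i] at h
        exact h
      rw [h, sub_sub_cancel, smul_smul]
    set d : ℝ := (2 * ⟪u (i - 1), ‖g i‖⁻¹ • g i⟫) * ‖g i‖⁻¹ with hd
    have e1 : ⟪u (i - 1), u (i - 1)⟫ - ⟪u (i - 1), u i⟫ = d * (2 * γ) := by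
      rw [← inner_sub_right, hrefl', real_inner_smul_right, hγ']
    have e2 : ⟪u (i - 1), P i⟫ - ⟪u i, P i⟫ = d * 2 := by
      rw [← inner_sub_left, hrefl', real_inner_smul_left, hgp]
    have e3 : uvec (P i) (P (i - 1)) = -u (i - 1) := by
      rw [hu]
      simp only [hprev, uvec, norm_sub_rev (P (i - 1)) (P i), ← smul_neg, neg_sub]
    rw [e3, show uvec (P i) (P (i + 1)) = u i from rfl, inner_neg_left]
    have h1 := hnormu (i - 1)
    rw [e2]
    nlinarith [e1]
  rw [Finset.sum_congr rfl (fun i _ => key i)]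
  have hre : ∑ i : ZMod N, ⟪u (i - 1), P i⟫ = ∑ i : ZMod N, ⟪u i, P (i + 1)⟫ := by
    apply Fintype.sum_equiv (Equiv.subRight (1 : ZMod N))
    intro i
    simp only [Equiv.subRight_apply, hprev]
  have hsum : ∑ i : ZMod N, (γ * (⟪u (i - 1), P i⟫ - ⟪u i, P i⟫) - 1) =
      γ * (∑ i : ZMod N, (⟪u (i - 1), P i⟫ - ⟪u i, P i⟫)) - N := by
    rw [Finset.sum_sub_distrib, Finset.mul_sum, ← Finset.mul_sum]
    simp [ZMod.card]
  rw [hsum, Finset.sum_sub_distrib, hre, ← Finset.sum_sub_distrib]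
  congr 2
  apply Finset.sum_congr rfl
  intro i _
  rw [← inner_sub_right, hlen]
end
end

section
/- For every convex N-periodic billiard orbit P of the ellipse E (N ≥ 3), with Joachimsthal constant γ, the perimeter L = ∑_i ‖P(i+1) − P(i)‖ satisfies L = 8γ · ∑_{i ∈ ZMod N} 1/‖∇f(P i)‖². -/
open scoped RealInnerProductSpace

noncomputable section

lemma inner_two (x y : Pt) : ⟪x, y⟫ = x 0 * y 0 + x 1 * y 1 := by
  simp [PiLp.inner_apply, Fin.sum_univ_two, RCLike.inner_apply]
  ring

lemma gradE_inner_self (a b : ℝ) (p : Pt) :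
    ⟪gradE a b p, p⟫ = 2 * fE a b p := by
  have h0 : gradE a b p 0 = 2 * p 0 / a ^ 2 := rfl
  have h1 : gradE a b p 1 = 2 * p 1 / b ^ 2 := rfl
  rw [inner_two, h0, h1, fE]; ring

/-- Per-vertex identity: ⟪u_{i-1} - u_i, P i⟫ = 8γ/‖∇f(P i)‖². -/
lemma vertex_identity (a b : ℝ) {N : ℕ} (P : ZMod N → Pt)
    (hO : IsOrbit a b P) (γ : ℝ) (hγ : ∀ i : ZMod N, joach a b P i = γ)
    (i : ZMod N) :
    ⟪uvec (P (i - 1)) (P i), P i⟫ - ⟪uvec (P i) (P (i + 1)), P i⟫ =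
      8 * γ * (1 / ‖gradE a b (P i)‖ ^ 2) := by
  obtain ⟨hell, -, hrefl⟩ := hO
  set g : Pt := gradE a b (P i) with hg
  set u : Pt := uvec (P (i - 1)) (P i) with hu
  have hug : ⟪u, g⟫ = 2 * γ := by
    have := hγ i
    rw [joach] at this
    linarith
  have hgp : ⟪g, P i⟫ = 2 := by
    rw [gradE_inner_self, hell i]; ring
  have hgne : ‖g‖ ≠ 0 := by
    intro h
    rw [norm_eq_zero] at h
    rw [h, inner_zero_left] at hgp
    norm_num at hgp
  rw [← inner_sub_left, hrefl i]
  have : u - (u - (2 * ⟪u, ‖g‖⁻¹ • g⟫) • (‖g‖⁻¹ • g)) =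
      (2 * ⟪u, ‖g‖⁻¹ • g⟫) • (‖g‖⁻¹ • g) := by abel
  rw [this, real_inner_smul_left, real_inner_smul_left, real_inner_smul_right,
    hug, hgp]
  field_simp
  ring

/-- L = 8γ·∑ᵢ 1/‖∇f(P i)‖² for a convex N-periodic orbit. -/
theorem perimeter_formula (a b : ℝ) (hb : 0 < b) (hab : b ≤ a)
    (N : ℕ) [NeZero N] (hN : 3 ≤ N) (P : ZMod N → Pt) (hP : IsConvexOrbit a b P)
    (γ : ℝ) (hγ : ∀ i : ZMod N, joach a b P i = γ) :
    (∑ i : ZMod N, ‖P (i + 1) - P i‖) =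
      8 * γ * ∑ i : ZMod N, 1 / ‖gradE a b (P i)‖ ^ 2 := by
  obtain ⟨hO, -⟩ := hP
  have hne := hO.2.1
  -- Step 1: each side length is an inner product with the unit vector
  have hlen : ∀ i : ZMod N, ‖P (i + 1) - P i‖ =
      ⟪uvec (P i) (P (i + 1)), P (i + 1)⟫ - ⟪uvec (P i) (P (i + 1)), P i⟫ := by
    intro i
    rw [← inner_sub_right, uvec, real_inner_smul_left,
      real_inner_self_eq_norm_sq]
    have hd : ‖P (i + 1) - P i‖ ≠ 0 := by
      simpa [sub_eq_zero] using hne i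
    field_simp
  -- Step 2: reindex
  have hshift : (∑ i : ZMod N, ⟪uvec (P i) (P (i + 1)), P (i + 1)⟫) =
      ∑ i : ZMod N, ⟪uvec (P (i - 1)) (P i), P i⟫ := by
    apply Fintype.sum_equiv (Equiv.addRight (1 : ZMod N))
    intro i
    simp
  calc (∑ i : ZMod N, ‖P (i + 1) - P i‖)
      = ∑ i : ZMod N, (⟪uvec (P i) (P (i + 1)), P (i + 1)⟫
          - ⟪uvec (P i) (P (i + 1)), P i⟫) := by
        exact Finset.sum_congr rfl fun i _ => hlen i
    _ = (∑ i : ZMod N, ⟪uvec (P i) (P (i + 1)), P (i + 1)⟫)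
          - ∑ i : ZMod N, ⟪uvec (P i) (P (i + 1)), P i⟫ := by
        rw [Finset.sum_sub_distrib]
    _ = ∑ i : ZMod N, (⟪uvec (P (i - 1)) (P i), P i⟫
          - ⟪uvec (P i) (P (i + 1)), P i⟫) := by
        rw [hshift, Finset.sum_sub_distrib]
    _ = ∑ i : ZMod N, 8 * γ * (1 / ‖gradE a b (P i)‖ ^ 2) := by
        exact Finset.sum_congr rfl fun i _ => vertex_identity a b P hO γ hγ i
    _ = 8 * γ * ∑ i : ZMod N, 1 / ‖gradE a b (P i)‖ ^ 2 := by
        rw [Finset.mul_sum]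
end
end

section
/- Generalized Mittenpunkt: let P be a convex N-periodic billiard orbit of E (N ≥ 3). For each i, if T ∈ ℝ² is the corresponding vertex of the tangential polygon, i.e., T·∇f(P i) = 2 and T·∇f(P(i+1)) = 2, then T, the midpoint M = (P i + P(i+1))/2 of the orbit side, and the origin (the center of the billiard) are collinear; equivalently det(T, M) = T₁·M₂ − T₂·M₁ = 0. Hence the lines from the tangential polygon's vertices through the midpoints of the orbit's sides all concur at the billiard's center. -/
open scoped RealInnerProductSpace

noncomputable section

/-- generalized Mittenpunkt — each tangential-polygon vertex, the
midpoint of the corresponding orbit side, and the billiard center are collinear. -/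
theorem generalized_mittenpunkt (a b : ℝ) (hb : 0 < b) (hab : b ≤ a)
    (N : ℕ) (hN : 3 ≤ N) (P : ZMod N → Pt) (hP : IsConvexOrbit a b P) :
    ∀ (i : ZMod N) (T : Pt), ⟪T, gradE a b (P i)⟫ = 2 →
      ⟪T, gradE a b (P (i + 1))⟫ = 2 →
      cross T ((2 : ℝ)⁻¹ • (P i + P (i + 1))) = 0 := by
  intro i T hT1 hT2
  obtain ⟨⟨hon, hne, -⟩, -⟩ := hP
  have ha : a ≠ 0 := (lt_of_lt_of_le hb hab).ne'
  have hbne : b ≠ 0 := hb.ne'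
  simp only [gradE, PiLp.inner_apply, RCLike.inner_apply, conj_trivial,
    Fin.sum_univ_two, WithLp.equiv_symm_apply, PiLp.toLp_apply, Matrix.cons_val_zero, Matrix.cons_val_one,
    Matrix.head_cons] at hT1 hT2
  have hp := hon i
  have hq := hon (i + 1)
  simp only [fE] at hp hq
  have e1 : T 0 * P i 0 * b ^ 2 + T 1 * P i 1 * a ^ 2 = a ^ 2 * b ^ 2 := by
    field_simp at hT1; linarith
  have e2 : T 0 * P (i + 1) 0 * b ^ 2 + T 1 * P (i + 1) 1 * a ^ 2 = a ^ 2 * b ^ 2 := by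
    field_simp at hT2; linarith
  have ep : P i 0 ^ 2 * b ^ 2 + P i 1 ^ 2 * a ^ 2 = a ^ 2 * b ^ 2 := by
    field_simp at hp; linarith
  have eq' : P (i + 1) 0 ^ 2 * b ^ 2 + P (i + 1) 1 ^ 2 * a ^ 2 = a ^ 2 * b ^ 2 := by
    field_simp at hq; linarith
  have hd : P i 0 ≠ P (i + 1) 0 ∨ P i 1 ≠ P (i + 1) 1 := by
    by_contra h
    push_neg at h
    exact hne i (by ext j; fin_cases j <;> simp [h.1.symm, h.2.symm])
  simp only [cross, PiLp.smul_apply, PiLp.add_apply, smul_eq_mul]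
  rcases hd with hd0 | hd1
  · have key : (T 0 * (P i 1 + P (i + 1) 1) - T 1 * (P i 0 + P (i + 1) 0)) *
        ((P i 0 - P (i + 1) 0) * (a ^ 2 * b ^ 2)) = 0 := by
      linear_combination (a ^ 2 * (P i 1 + P (i + 1) 1)) * e1
        - (a ^ 2 * (P i 1 + P (i + 1) 1)) * e2
        - (a ^ 2 * T 1) * ep + (a ^ 2 * T 1) * eq'
    have hne0 : (P i 0 - P (i + 1) 0) * (a ^ 2 * b ^ 2) ≠ 0 :=
      mul_ne_zero (sub_ne_zero.mpr hd0) (by positivity)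
    have hfac := (mul_eq_zero.mp key).resolve_right hne0
    linarith
  · have key : (T 0 * (P i 1 + P (i + 1) 1) - T 1 * (P i 0 + P (i + 1) 0)) *
        ((P i 1 - P (i + 1) 1) * (a ^ 2 * b ^ 2)) = 0 := by
      linear_combination (-(b ^ 2 * (P i 0 + P (i + 1) 0))) * e1
        + (b ^ 2 * (P i 0 + P (i + 1) 0)) * e2
        + (b ^ 2 * T 0) * ep - (b ^ 2 * T 0) * eq'
    have hne0 : (P i 1 - P (i + 1) 1) * (a ^ 2 * b ^ 2) ≠ 0 :=
      mul_ne_zero (sub_ne_zero.mpr hd1) (by positivity)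
    have hfac := (mul_eq_zero.mp key).resolve_right hne0
    linarith
end
end

section
/- Generalized Extouch points: let P be a convex N-periodic billiard orbit of E (N ≥ 3), let 0 < λ < b², and suppose the confocal ellipse C_λ = {(x,y) : x²/(a²−λ) + y²/(b²−λ) = 1} is tangent to each of the orbit's side lines (the caustic). For each i, let T be the tangential polygon vertex (T·∇f(P i) = 2 and T·∇f(P(i+1)) = 2), and let F be the foot of the perpendicular dropped from T onto the side line through P i and P(i+1), i.e., the unique point of that line with (T − F)·(P(i+1) − P i) = 0. Then F lies on C_λ. -/
set_option maxHeartbeats 2000000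


open scoped RealInnerProductSpace

noncomputable section

/-- generalized extouch points — the foot of the perpendicular from a
tangential-polygon vertex onto the corresponding orbit side lies on the caustic. -/
theorem generalized_extouch_on_caustic (a b : ℝ) (hb : 0 < b) (hab : b ≤ a)
    (N : ℕ) (hN : 3 ≤ N) (P : ZMod N → Pt) (hP : IsConvexOrbit a b P)
    (lam : ℝ) (hlam0 : 0 < lam) (hlamb : lam < b ^ 2)
    (htan : ∀ i : ZMod N,
      ∃! z : Pt, z ∈ lineThrough (P i) (P (i + 1)) ∧ causticMem a b lam z) :
    ∀ (i : ZMod N) (T F : Pt), ⟪T, gradE a b (P i)⟫ = 2 →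
      ⟪T, gradE a b (P (i + 1))⟫ = 2 →
      F ∈ lineThrough (P i) (P (i + 1)) →
      ⟪T - F, P (i + 1) - P i⟫ = 0 →
      causticMem a b lam F := by
  intro i T F hT1 hT2 hF hperp
  obtain ⟨⟨hon, hneq, _⟩, _⟩ := hP
  have ha : 0 < a := lt_of_lt_of_le hb hab
  have hα : 0 < a ^ 2 - lam := by nlinarith
  have hβ : 0 < b ^ 2 - lam := by nlinarith
  set p : Pt := P i with hp
  set q : Pt := P (i + 1) with hq
  have hne : q ≠ p := hneq i
  obtain ⟨tF, hFt⟩ := hF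
  obtain ⟨z, ⟨⟨s, hzs⟩, hzc⟩, huniq⟩ := htan i
  have hz0 : z 0 = p 0 + s * (q 0 - p 0) := by rw [hzs]; simp [hp, hq]
  have hz1 : z 1 = p 1 + s * (q 1 - p 1) := by rw [hzs]; simp [hp, hq]
  have hF0 : F 0 = p 0 + tF * (q 0 - p 0) := by rw [hFt]; simp
  have hF1 : F 1 = p 1 + tF * (q 1 - p 1) := by rw [hFt]; simp
  have hd : ¬ (q 0 - p 0 = 0 ∧ q 1 - p 1 = 0) := by
    rintro ⟨h0, h1⟩
    exact hne (by ext j; fin_cases j <;> simp <;> linarith)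
  have hdd : 0 < (q 0 - p 0) ^ 2 + (q 1 - p 1) ^ 2 := by
    rcases not_and_or.mp hd with h | h
    · have h2 : 0 < (q 0 - p 0) ^ 2 := lt_of_le_of_ne (sq_nonneg _) (Ne.symm (pow_ne_zero 2 h))
      linarith [sq_nonneg (q 1 - p 1)]
    · have h2 : 0 < (q 1 - p 1) ^ 2 := lt_of_le_of_ne (sq_nonneg _) (Ne.symm (pow_ne_zero 2 h))
      linarith [sq_nonneg (q 0 - p 0)]
  -- clear the inner products
  have H1 : T 0 * p 0 * b ^ 2 + T 1 * p 1 * a ^ 2 = a ^ 2 * b ^ 2 := by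
    simp only [gradE, PiLp.inner_apply, Fin.sum_univ_two, RCLike.inner_apply, conj_trivial,
      WithLp.equiv_symm_apply, PiLp.toLp_apply, Matrix.cons_val_zero, Matrix.cons_val_one, Matrix.head_cons] at hT1
    field_simp at hT1
    linarith
  have H2 : T 0 * q 0 * b ^ 2 + T 1 * q 1 * a ^ 2 = a ^ 2 * b ^ 2 := by
    simp only [gradE, PiLp.inner_apply, Fin.sum_univ_two, RCLike.inner_apply, conj_trivial,
      WithLp.equiv_symm_apply, PiLp.toLp_apply, Matrix.cons_val_zero, Matrix.cons_val_one, Matrix.head_cons] at hT2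
    field_simp at hT2
    linarith
  have H3 : (b ^ 2 - lam) * (p 0 + s * (q 0 - p 0)) ^ 2
      + (a ^ 2 - lam) * (p 1 + s * (q 1 - p 1)) ^ 2 = (a ^ 2 - lam) * (b ^ 2 - lam) := by
    unfold causticMem at hzc
    rw [hz0, hz1, div_add_div _ _ hα.ne' hβ.ne', div_eq_one_iff_eq (by positivity)] at hzc
    linear_combination hzc
  -- tangency : the caustic-gradient at z is orthogonal to the side direction
  have H4 : (b ^ 2 - lam) * (p 0 + s * (q 0 - p 0)) * (q 0 - p 0)
      + (a ^ 2 - lam) * (p 1 + s * (q 1 - p 1)) * (q 1 - p 1) = 0 := by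
    by_contra hR
    have hA' : 0 < (b ^ 2 - lam) * (q 0 - p 0) ^ 2 + (a ^ 2 - lam) * (q 1 - p 1) ^ 2 := by
      rcases not_and_or.mp hd with h | h
      · have h2 : 0 < (q 0 - p 0) ^ 2 := lt_of_le_of_ne (sq_nonneg _) (Ne.symm (pow_ne_zero 2 h))
        nlinarith [mul_nonneg hα.le (sq_nonneg (q 1 - p 1)), mul_pos hβ h2]
      · have h2 : 0 < (q 1 - p 1) ^ 2 := lt_of_le_of_ne (sq_nonneg _) (Ne.symm (pow_ne_zero 2 h))
        nlinarith [mul_nonneg hβ.le (sq_nonneg (q 0 - p 0)), mul_pos hα h2]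
    obtain ⟨c, hcA, hc0⟩ : ∃ c : ℝ,
        c * ((b ^ 2 - lam) * (q 0 - p 0) ^ 2 + (a ^ 2 - lam) * (q 1 - p 1) ^ 2)
          = 2 * ((b ^ 2 - lam) * (p 0 + s * (q 0 - p 0)) * (q 0 - p 0)
            + (a ^ 2 - lam) * (p 1 + s * (q 1 - p 1)) * (q 1 - p 1)) ∧ c ≠ 0 := by
      exact ⟨_, div_mul_cancel₀ _ hA'.ne',
        div_ne_zero (mul_ne_zero two_ne_zero hR) hA'.ne'⟩
    have hz'c : causticMem a b lam (p + (s - c) • (q - p)) := by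
      unfold causticMem
      simp only [PiLp.add_apply, PiLp.smul_apply, PiLp.sub_apply, smul_eq_mul]
      rw [div_add_div _ _ hα.ne' hβ.ne', div_eq_one_iff_eq (by positivity)]
      linear_combination H3 + c * hcA
    have heq : p + (s - c) • (q - p) = z := huniq _ ⟨⟨s - c, rfl⟩, hz'c⟩
    have e0 : p 0 + (s - c) * (q 0 - p 0) = p 0 + s * (q 0 - p 0) := by
      have := congrArg (fun w : Pt => w 0) heq
      simpa [hz0] using this
    have e1 : p 1 + (s - c) * (q 1 - p 1) = p 1 + s * (q 1 - p 1) := by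
      have := congrArg (fun w : Pt => w 1) heq
      simpa [hz1] using this
    have d0z : q 0 - p 0 = 0 := by
      have hc : c * (q 0 - p 0) = 0 := by nlinarith [e0]
      exact (mul_eq_zero.mp hc).resolve_left hc0
    have d1z : q 1 - p 1 = 0 := by
      have hc : c * (q 1 - p 1) = 0 := by nlinarith [e1]
      exact (mul_eq_zero.mp hc).resolve_left hc0
    exact hd ⟨d0z, d1z⟩
  -- T's polar line and z's tangent line coincide
  have H5 : T 0 * (q 0 - p 0) * b ^ 2 + T 1 * (q 1 - p 1) * a ^ 2 = 0 := by
    linear_combination H2 - H1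
  have hD : p 0 * (q 1 - p 1) - p 1 * (q 0 - p 0) ≠ 0 := by
    intro hD0
    have e0 : (q 0 - p 0) * (a ^ 2 * b ^ 2) = 0 := by
      linear_combination (-(q 0 - p 0)) * H1 + p 0 * H5 - T 1 * a ^ 2 * hD0
    have e1 : (q 1 - p 1) * (a ^ 2 * b ^ 2) = 0 := by
      linear_combination (-(q 1 - p 1)) * H1 + p 1 * H5 + T 0 * b ^ 2 * hD0
    have hab2 : (a ^ 2 * b ^ 2) ≠ 0 := by positivity
    exact hd ⟨by simpa [hab2] using mul_eq_zero.mp e0, by simpa [hab2] using mul_eq_zero.mp e1⟩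
  have H6 : (b ^ 2 - lam) * (p 0 + s * (q 0 - p 0)) * p 0
      + (a ^ 2 - lam) * (p 1 + s * (q 1 - p 1)) * p 1 = (a ^ 2 - lam) * (b ^ 2 - lam) := by
    linear_combination H3 - s * H4
  have H7 : (b ^ 2 - lam) * (p 0 + s * (q 0 - p 0)) * q 0
      + (a ^ 2 - lam) * (p 1 + s * (q 1 - p 1)) * q 1 = (a ^ 2 - lam) * (b ^ 2 - lam) := by
    linear_combination H3 + (1 - s) * H4
  have E1 : b ^ 2 * (b ^ 2 - lam) * p 0 * (T 0 * (a ^ 2 - lam) - (p 0 + s * (q 0 - p 0)) * a ^ 2)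
      + a ^ 2 * (a ^ 2 - lam) * p 1 * (T 1 * (b ^ 2 - lam) - (p 1 + s * (q 1 - p 1)) * b ^ 2) = 0 := by
    linear_combination (a ^ 2 - lam) * (b ^ 2 - lam) * H1 - a ^ 2 * b ^ 2 * H6
  have E2 : b ^ 2 * (b ^ 2 - lam) * q 0 * (T 0 * (a ^ 2 - lam) - (p 0 + s * (q 0 - p 0)) * a ^ 2)
      + a ^ 2 * (a ^ 2 - lam) * q 1 * (T 1 * (b ^ 2 - lam) - (p 1 + s * (q 1 - p 1)) * b ^ 2) = 0 := by
    linear_combination (a ^ 2 - lam) * (b ^ 2 - lam) * H2 - a ^ 2 * b ^ 2 * H7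
  have E3 : b ^ 2 * (b ^ 2 - lam) * (q 0 - p 0) * (T 0 * (a ^ 2 - lam) - (p 0 + s * (q 0 - p 0)) * a ^ 2)
      + a ^ 2 * (a ^ 2 - lam) * (q 1 - p 1) * (T 1 * (b ^ 2 - lam) - (p 1 + s * (q 1 - p 1)) * b ^ 2) = 0 := by
    linear_combination E2 - E1
  have hU0 : T 0 * (a ^ 2 - lam) - (p 0 + s * (q 0 - p 0)) * a ^ 2 = 0 := by
    have key : (T 0 * (a ^ 2 - lam) - (p 0 + s * (q 0 - p 0)) * a ^ 2)
        * (b ^ 2 * (b ^ 2 - lam) * (p 0 * (q 1 - p 1) - p 1 * (q 0 - p 0))) = 0 := by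
      linear_combination (q 1 - p 1) * E1 - p 1 * E3
    have hne2 : b ^ 2 * (b ^ 2 - lam) * (p 0 * (q 1 - p 1) - p 1 * (q 0 - p 0)) ≠ 0 := by
      have : b ^ 2 * (b ^ 2 - lam) ≠ 0 := by positivity
      exact mul_ne_zero this hD
    exact (mul_eq_zero.mp key).resolve_right hne2
  have hU1 : T 1 * (b ^ 2 - lam) - (p 1 + s * (q 1 - p 1)) * b ^ 2 = 0 := by
    have key : (T 1 * (b ^ 2 - lam) - (p 1 + s * (q 1 - p 1)) * b ^ 2)
        * (a ^ 2 * (a ^ 2 - lam) * (p 0 * (q 1 - p 1) - p 1 * (q 0 - p 0))) = 0 := by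
      linear_combination p 0 * E3 - (q 0 - p 0) * E1
    have hne2 : a ^ 2 * (a ^ 2 - lam) * (p 0 * (q 1 - p 1) - p 1 * (q 0 - p 0)) ≠ 0 := by
      have : a ^ 2 * (a ^ 2 - lam) ≠ 0 := by positivity
      exact mul_ne_zero this hD
    exact (mul_eq_zero.mp key).resolve_right hne2
  -- z is the foot of the perpendicular from T
  have hK : (T 0 - (p 0 + s * (q 0 - p 0))) * (q 0 - p 0)
      + (T 1 - (p 1 + s * (q 1 - p 1))) * (q 1 - p 1) = 0 := by
    have key : ((T 0 - (p 0 + s * (q 0 - p 0))) * (q 0 - p 0)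
        + (T 1 - (p 1 + s * (q 1 - p 1))) * (q 1 - p 1))
        * (a ^ 2 * (a ^ 2 - lam) * b ^ 2 * (b ^ 2 - lam)) = 0 := by
      linear_combination a ^ 2 * b ^ 2 * (b ^ 2 - lam) * (q 0 - p 0) * hU0
        + a ^ 2 * b ^ 2 * (a ^ 2 - lam) * (q 1 - p 1) * hU1
        + a ^ 2 * b ^ 2 * lam * H4
    have hne2 : (a ^ 2 * (a ^ 2 - lam) * b ^ 2 * (b ^ 2 - lam)) ≠ 0 := by positivity
    exact (mul_eq_zero.mp key).resolve_right hne2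
  -- F is also a foot, hence F = z
  have hperp' : (T 0 - F 0) * (q 0 - p 0) + (T 1 - F 1) * (q 1 - p 1) = 0 := by
    simp only [PiLp.inner_apply, Fin.sum_univ_two, RCLike.inner_apply, conj_trivial,
      PiLp.sub_apply] at hperp
    linarith
  have htFs : tF = s := by
    have key : (tF - s) * ((q 0 - p 0) ^ 2 + (q 1 - p 1) ^ 2) = 0 := by
      rw [hF0, hF1] at hperp'
      linear_combination hK - hperp'
    have := (mul_eq_zero.mp key).resolve_right hdd.ne'
    linarith
  unfold causticMem
  rw [hF0, hF1, htFs, div_add_div _ _ hα.ne' hβ.ne', div_eq_one_iff_eq (by positivity)]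
  linear_combination H3
end
end
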